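/- arXiv:1403.3885 — 9 statements merged into one kernel-verified Lean document; each statement's English description precedes it below -/
import Mathlib

section
/- Along any solution p(t) of the replicator dynamics in a linear congestion game, the potential function Ψ(p) = Σ_i ĉ_i(p) + Σ_{i,γ∈S_i} Σ_{e∈γ}(a_e + b_e) p_{iγ} satisfies dΨ(p(t))/dt = −Σ_i Σ_{γ,γ'∈S_i} p_{iγ}(t) p_{iγ'}(t) (c_{iγ}(p(t)) − c_{iγ'}(p(t)))², which is ≤ 0, with equality at time t if and only if p(t) is a fixed point of the replicator dynamics. -/
open Filter Topology Finset MeasureTheory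

variable {N E : Type} [Fintype N] [DecidableEq N] [Fintype E] [DecidableEq E]
  {S : N → Type} [∀ i, Fintype (S i)] [∀ i, DecidableEq (S i)]

/-- The load of resource `e` under the pure strategy profile `s`:
the number of players whose chosen strategy uses `e`. -/
def resLoad (strat : ∀ i, S i → Finset E) (s : ∀ i, S i) (e : E) : ℕ :=
  (Finset.univ.filter fun j => e ∈ strat j (s j)).card

/-- The cost of player `i` at the pure profile `s`, with linear resource costs
`c_e(x) = a_e·x + b_e`. -/
def pureCost (strat : ∀ i, S i → Finset E) (a b : E → ℝ) (s : ∀ i, S i) (i : N) : ℝ :=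
  ∑ e ∈ strat i (s i), (a e * (resLoad strat s e : ℝ) + b e)

/-- Expected cost `c_{iγ}(p)` of player `i` playing strategy `γ` against the
mixed profile `p` (expectation over the other players' mixed strategies). -/
def expCost (strat : ∀ i, S i → Finset E) (a b : E → ℝ) (p : ∀ i, S i → ℝ)
    (i : N) (γ : S i) : ℝ :=
  ∑ s : ∀ j, S j,
    if s i = γ then (∏ j ∈ Finset.univ.erase i, p j (s j)) * pureCost strat a b s i
    else 0

/-- Expected cost `ĉ_i(p) = Σ_γ p_{iγ} c_{iγ}(p)` of player `i`. -/
def avgCost (strat : ∀ i, S i → Finset E) (a b : E → ℝ) (p : ∀ i, S i → ℝ)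
    (i : N) : ℝ :=
  ∑ γ, p i γ * expCost strat a b p i γ

/-- Membership in the product of simplices `Δ`. -/
def inSimplex (p : ∀ i, S i → ℝ) : Prop :=
  ∀ i, (∀ γ, 0 ≤ p i γ) ∧ ∑ γ, p i γ = 1

/-- `q` is a fixed point of the replicator dynamics: every strategy played with
positive probability has expected cost equal to the player's average cost. -/
def isFixedPt (strat : ∀ i, S i → Finset E) (a b : E → ℝ) (q : ∀ i, S i → ℝ) : Prop :=
  ∀ i (γ : S i), 0 < q i γ → expCost strat a b q i γ = avgCost strat a b q i

/-- `p : ℝ → Δ` is a solution of the replicator dynamics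
`dp_{iγ}/dt = p_{iγ}(ĉ_i(p) - c_{iγ}(p))` on `[0,∞)`, staying in `Δ`. -/
def isReplicatorSol (strat : ∀ i, S i → Finset E) (a b : E → ℝ)
    (p : ℝ → ∀ i, S i → ℝ) : Prop :=
  (∀ t, 0 ≤ t → inSimplex (p t)) ∧
  ∀ t, 0 ≤ t → ∀ i (γ : S i),
    HasDerivAt (fun τ => p τ i γ)
      (p t i γ * (avgCost strat a b (p t) i - expCost strat a b (p t) i γ)) t

/-- The potential function `Ψ(p) = Σ_i ĉ_i(p) + Σ_{i,γ} Σ_{e∈γ} (a_e + b_e) p_{iγ}`. -/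
def potFn (strat : ∀ i, S i → Finset E) (a b : E → ℝ) (p : ∀ i, S i → ℝ) : ℝ :=
  (∑ i, avgCost strat a b p i) +
    ∑ i, ∑ γ, (∑ e ∈ strat i γ, (a e + b e)) * p i γ

/-!
`Σ_i ĉ_i(p)` is the expectation, under the product distribution `p`, of the social cost
`W(s) = Σ_e (a_e ℓ_e(s) + b_e) ℓ_e(s)`, so `Ψ` is multiaffine in `p` and
`∂Ψ/∂p_{jγ} = E[W | s_j = γ] + Σ_{e∈γ} (a_e + b_e)`. Splitting off player `j`,
`W(s) = W_{-j}(s) + 2 c_j(s) - Σ_{e∈s_j} (a_e + b_e)`, where the social cost `W_{-j}` of the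
other players does not depend on `s_j`; hence `∂Ψ/∂p_{jγ} = K_j + 2 c_{jγ}(p)`. The replicator
velocities of each player sum to zero, so `K_j` drops out and
`dΨ/dt = 2 Σ_j Σ_γ p_{jγ} (ĉ_j - c_{jγ}) c_{jγ} = -2 Σ_j Var_{p_j}(c_j)`, and
`2 Var_w(c) = Σ_{x,y} w_x w_y (c_x - c_y)²`. A variance vanishes exactly when `c_j` is constant
on the support of `p_j`, i.e. at fixed points.
-/

section Weights

variable {α : Type*} [Fintype α] {w c : α → ℝ}

theorem sum_sum_mul_mul_sq_sub_eq (hw : ∑ x, w x = 1) :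
    ∑ x, ∑ y, w x * w y * (c x - c y) ^ 2 = 2 * ∑ x, w x * (c x - ∑ y, w y * c y) ^ 2 := by
  set A := ∑ y, w y * c y
  have expand_left : ∀ x, ∑ y, w x * w y * (c x - c y) ^ 2
      = w x * c x ^ 2 * ∑ y, w y - 2 * (w x * c x) * A + w x * ∑ y, w y * c y ^ 2 := by
    intro x
    simp only [mul_sum, ← sum_sub_distrib, ← sum_add_distrib, A]
    exact sum_congr rfl fun y _ => by ring
  have expand_right : ∀ x, w x * (c x - A) ^ 2
      = w x * c x ^ 2 - 2 * A * (w x * c x) + A ^ 2 * w x := fun x => by ring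
  simp only [expand_left, expand_right, sum_add_distrib, sum_sub_distrib, ← sum_mul, ← mul_sum,
    hw]
  ring

theorem sum_sum_mul_mul_sq_sub_nonneg (hw0 : ∀ x, 0 ≤ w x) :
    0 ≤ ∑ x, ∑ y, w x * w y * (c x - c y) ^ 2 :=
  sum_nonneg fun x _ => sum_nonneg fun y _ => mul_nonneg (mul_nonneg (hw0 x) (hw0 y)) (sq_nonneg _)

theorem sum_mul_sub_mul_add_two_mul_eq (hw : ∑ x, w x = 1) (K : ℝ) :
    ∑ x, w x * (∑ y, w y * c y - c x) * (K + 2 * c x)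
      = -∑ x, ∑ y, w x * w y * (c x - c y) ^ 2 := by
  rw [sum_sum_mul_mul_sq_sub_eq hw]
  set A := ∑ y, w y * c y
  have expand : ∀ x, w x * (A - c x) * (K + 2 * c x) - (-(2 * (w x * (c x - A) ^ 2)))
      = (K + 2 * A) * (A * w x - w x * c x) := fun x => by ring
  rw [mul_sum, ← sub_eq_zero, ← sum_neg_distrib, ← sum_sub_distrib]
  simp only [expand, ← mul_sum, sum_sub_distrib, hw]
  ring

theorem sum_sum_mul_mul_sq_sub_eq_zero_iff (hw : ∑ x, w x = 1) (hw0 : ∀ x, 0 ≤ w x) :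
    ∑ x, ∑ y, w x * w y * (c x - c y) ^ 2 = 0 ↔ ∀ x, 0 < w x → c x = ∑ y, w y * c y := by
  rw [sum_sum_mul_mul_sq_sub_eq hw, mul_eq_zero, or_iff_right two_ne_zero,
    sum_eq_zero_iff_of_nonneg fun x _ => mul_nonneg (hw0 x) (sq_nonneg _)]
  refine forall_congr' fun x => ?_
  rw [mul_eq_zero, pow_eq_zero_iff two_ne_zero, sub_eq_zero, (hw0 x).lt_iff_ne',
    or_iff_not_imp_left]
  simp

end Weights

namespace MixedProfile

variable {ι : Type*} [Fintype ι] [DecidableEq ι] {X : ι → Type*} [∀ i, Fintype (X i)]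

def expect (q : ∀ i, X i → ℝ) (F : (∀ i, X i) → ℝ) : ℝ :=
  ∑ s, (∏ k, q k (s k)) * F s

def condExpect [∀ i, DecidableEq (X i)] (q : ∀ i, X i → ℝ) (j : ι) (x : X j)
    (F : (∀ i, X i) → ℝ) : ℝ :=
  ∑ s, if s j = x then (∏ k ∈ univ.erase j, q k (s k)) * F s else 0

theorem sum_apply_mul_eq_sum_mul_sum_ite (j : ι) [DecidableEq (X j)] (g : X j → ℝ)
    (H : (∀ i, X i) → ℝ) :
    ∑ s, g (s j) * H s = ∑ x, g x * ∑ s, if s j = x then H s else 0 := by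
  simp only [mul_sum, mul_ite, mul_zero]
  rw [sum_comm]
  simp

theorem expect_sum (q : ∀ i, X i → ℝ) {κ : Type*} (t : Finset κ) (F : κ → (∀ i, X i) → ℝ) :
    ∑ k ∈ t, expect q (F k) = expect q fun s => ∑ k ∈ t, F k s := by
  simp only [expect, mul_sum]
  exact sum_comm

theorem expect_one (q : ∀ i, X i → ℝ) (hq : ∀ i, ∑ x, q i x = 1) :
    expect q (fun _ => 1) = 1 := by
  simp [expect, ← Fintype.prod_sum, hq]

variable [∀ i, DecidableEq (X i)]

theorem expect_eq_sum_mul_condExpect (q : ∀ i, X i → ℝ) (j : ι) (F : (∀ i, X i) → ℝ) :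
    expect q F = ∑ x, q j x * condExpect q j x F := by
  simp only [expect, condExpect]
  rw [← sum_apply_mul_eq_sum_mul_sum_ite j (q j)]
  exact sum_congr rfl fun s _ => by
    rw [← mul_assoc, mul_prod_erase univ (fun k => q k (s k)) (mem_univ j)]

theorem hasDerivAt_expect {p : ℝ → ∀ i, X i → ℝ} {p' : ∀ i, X i → ℝ} {t : ℝ}
    (hp : ∀ i x, HasDerivAt (fun τ => p τ i x) (p' i x) t) (F : (∀ i, X i) → ℝ) :
    HasDerivAt (fun τ => expect (p τ) F) (∑ j, ∑ x, p' j x * condExpect (p t) j x F) t := by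
  have hterm : ∀ s : ∀ i, X i, HasDerivAt (fun τ => (∏ k, p τ k (s k)) * F s)
      (∑ j, p' j (s j) * ((∏ k ∈ univ.erase j, p t k (s k)) * F s)) t := by
    intro s
    refine ((HasDerivAt.fun_finsetProd (u := univ) fun k _ => hp k (s k)).mul_const
      (F s)).congr_deriv ?_
    rw [sum_mul]
    exact sum_congr rfl fun j _ => by rw [smul_eq_mul]; ring
  refine (HasDerivAt.fun_sum (u := univ) fun s _ => hterm s).congr_deriv ?_
  rw [sum_comm]
  exact sum_congr rfl fun j _ => sum_apply_mul_eq_sum_mul_sum_ite j (p' j) _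

variable (q : ∀ i, X i → ℝ)

theorem condExpect_congr {j : ι} {x : X j} {F G : (∀ i, X i) → ℝ}
    (h : ∀ s, s j = x → F s = G s) : condExpect q j x F = condExpect q j x G :=
  sum_congr rfl fun s _ => by
    split_ifs with hs
    · rw [h s hs]
    · rfl

theorem condExpect_add_const_mul_sub (j : ι) (x : X j) (F G : (∀ i, X i) → ℝ) (c d : ℝ) :
    condExpect q j x (fun s => F s + c * G s - d)
      = condExpect q j x F + c * condExpect q j x G - d * condExpect q j x fun _ => 1 := by
  simp only [condExpect, mul_sum, ← sum_add_distrib, ← sum_sub_distrib]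
  exact sum_congr rfl fun s _ => by split_ifs <;> ring

/-- Swapping `x` and `y` in coordinate `j` matches the two fibres. -/
theorem condExpect_eq_of_update {j : ι} {F : (∀ i, X i) → ℝ}
    (hF : ∀ s y, F (Function.update s j y) = F s) (x y : X j) :
    condExpect q j x F = condExpect q j y F := by
  let σ : (∀ i, X i) → ∀ i, X i := fun s => Function.update s j (Equiv.swap x y (s j))
  have hσ : Function.Involutive σ := fun s => by simp [σ]
  rw [condExpect, ← Equiv.sum_comp (hσ.toPerm σ)]
  refine sum_congr rfl fun s _ => ?_
  have hprod : ∏ k ∈ univ.erase j, q k (σ s k) = ∏ k ∈ univ.erase j, q k (s k) :=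
    prod_congr rfl fun k hk => by simp [σ, Function.update_of_ne (ne_of_mem_erase hk)]
  simp only [Function.Involutive.coe_toPerm, hprod, hF, σ, Function.update_self,
    Equiv.swap_apply_eq_iff, Equiv.swap_apply_left]

theorem condExpect_one (hq : ∀ i, ∑ x, q i x = 1) (j : ι) (x : X j) :
    condExpect q j x (fun _ => 1) = 1 := by
  have h := expect_eq_sum_mul_condExpect q j (fun _ => 1)
  rwa [expect_one q hq, sum_congr rfl fun y _ => by
    rw [condExpect_eq_of_update q (F := fun _ => 1) (fun _ _ => rfl) y x],
    ← sum_mul, hq j, one_mul, eq_comm] at h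

end MixedProfile

section CongestionGame

variable (strat : ∀ i, S i → Finset E) (a b : E → ℝ)

def socialCost (s : ∀ i, S i) : ℝ :=
  ∑ i, pureCost strat a b s i

def loadExcept (j : N) (s : ∀ i, S i) (e : E) : ℕ :=
  ((univ.erase j).filter fun k => e ∈ strat k (s k)).card

def socialCostExcept (j : N) (s : ∀ i, S i) : ℝ :=
  ∑ e, (a e * loadExcept strat j s e + b e) * loadExcept strat j s e

def strategyWeight (i : N) (γ : S i) : ℝ :=
  ∑ e ∈ strat i γ, (a e + b e)

omit [Fintype E] [∀ i, Fintype (S i)] [∀ i, DecidableEq (S i)] in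
theorem resLoad_eq_loadExcept_add (j : N) (s : ∀ i, S i) (e : E) :
    (resLoad strat s e : ℝ) = loadExcept strat j s e + if e ∈ strat j (s j) then 1 else 0 := by
  rw [resLoad, loadExcept, card_filter, card_filter, ← add_sum_erase univ _ (mem_univ j)]
  push_cast
  ring

omit [Fintype E] [∀ i, Fintype (S i)] [∀ i, DecidableEq (S i)] in
theorem loadExcept_update (j : N) (s : ∀ i, S i) (x : S j) (e : E) :
    loadExcept strat j (Function.update s j x) e = loadExcept strat j s e := by
  unfold loadExcept
  congr 1
  exact filter_congr fun k hk => by rw [Function.update_of_ne (ne_of_mem_erase hk)]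

omit [∀ i, Fintype (S i)] [∀ i, DecidableEq (S i)] in
theorem socialCostExcept_update (j : N) (s : ∀ i, S i) (x : S j) :
    socialCostExcept strat a b j (Function.update s j x) = socialCostExcept strat a b j s := by
  simp only [socialCostExcept, loadExcept_update]

omit [DecidableEq N] [∀ i, Fintype (S i)] [∀ i, DecidableEq (S i)] in
theorem socialCost_eq_sum_resources (s : ∀ i, S i) :
    socialCost strat a b s = ∑ e, (a e * resLoad strat s e + b e) * resLoad strat s e := by
  simp only [socialCost, pureCost]
  rw [sum_comm' (t' := univ) (s' := fun e => univ.filter fun k => e ∈ strat k (s k))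
    (by simp)]
  refine sum_congr rfl fun e _ => ?_
  rw [sum_const, nsmul_eq_mul, resLoad]
  ring

omit [∀ i, Fintype (S i)] [∀ i, DecidableEq (S i)] in
theorem socialCost_eq_socialCostExcept_add (j : N) (s : ∀ i, S i) :
    socialCost strat a b s
      = socialCostExcept strat a b j s + 2 * pureCost strat a b s j
        - strategyWeight strat a b j (s j) := by
  rw [socialCost_eq_sum_resources, socialCostExcept, pureCost, strategyWeight,
    ← Fintype.sum_ite_mem (strat j (s j)), ← Fintype.sum_ite_mem (strat j (s j)), mul_sum,
    ← sum_add_distrib, ← sum_sub_distrib]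
  refine sum_congr rfl fun e _ => ?_
  rw [resLoad_eq_loadExcept_add strat j s e]
  split_ifs <;> ring

omit [Fintype E] in
theorem expCost_eq_condExpect (q : ∀ i, S i → ℝ) (i : N) (γ : S i) :
    expCost strat a b q i γ = MixedProfile.condExpect q i γ fun s => pureCost strat a b s i :=
  rfl

theorem condExpect_socialCost_add_strategyWeight {q : ∀ i, S i → ℝ} (hq : ∀ i, ∑ γ, q i γ = 1)
    (j : N) (γ : S j) :
    MixedProfile.condExpect q j γ (socialCost strat a b) + strategyWeight strat a b j γ
      = MixedProfile.condExpect q j γ (socialCostExcept strat a b j)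
        + 2 * expCost strat a b q j γ := by
  rw [MixedProfile.condExpect_congr q fun s (hs : s j = γ) =>
      hs ▸ socialCost_eq_socialCostExcept_add strat a b j s,
    MixedProfile.condExpect_add_const_mul_sub, MixedProfile.condExpect_one q hq,
    expCost_eq_condExpect]
  ring

omit [Fintype E] in
theorem sum_avgCost_eq_expect (q : ∀ i, S i → ℝ) :
    ∑ i, avgCost strat a b q i = MixedProfile.expect q (socialCost strat a b) := by
  simp only [avgCost, expCost_eq_condExpect, ← MixedProfile.expect_eq_sum_mul_condExpect]
  exact MixedProfile.expect_sum q univ _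

/-- `∂Ψ/∂p_{jγ}`; `Ψ` is multiaffine in `p`. -/
def potFnPartial (q : ∀ i, S i → ℝ) (j : N) (γ : S j) : ℝ :=
  MixedProfile.condExpect q j γ (socialCost strat a b) + strategyWeight strat a b j γ

omit [Fintype E] in
theorem hasDerivAt_potFn {p : ℝ → ∀ i, S i → ℝ} {p' : ∀ i, S i → ℝ} {t : ℝ}
    (hp : ∀ i γ, HasDerivAt (fun τ => p τ i γ) (p' i γ) t) :
    HasDerivAt (fun τ => potFn strat a b (p τ))
      (∑ j, ∑ γ, p' j γ * potFnPartial strat a b (p t) j γ) t := by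
  simp only [potFn, sum_avgCost_eq_expect]
  refine ((MixedProfile.hasDerivAt_expect hp _).add
    (HasDerivAt.fun_sum fun j _ => HasDerivAt.fun_sum fun γ _ =>
      (hp j γ).const_mul _)).congr_deriv ?_
  simp only [potFnPartial, strategyWeight, mul_add, sum_add_distrib, mul_comm]

theorem sum_replicator_mul_potFnPartial {q : ∀ i, S i → ℝ} (hq : inSimplex q) :
    ∑ j, ∑ γ, q j γ * (avgCost strat a b q j - expCost strat a b q j γ)
        * potFnPartial strat a b q j γ
      = -∑ i, ∑ γ, ∑ γ', q i γ * q i γ' *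
          (expCost strat a b q i γ - expCost strat a b q i γ') ^ 2 := by
  rw [← sum_neg_distrib]
  refine sum_congr rfl fun j _ => ?_
  obtain ⟨γ₀, -⟩ := nonempty_of_sum_ne_zero ((hq j).2 ▸ one_ne_zero)
  have hpartial : ∀ γ, potFnPartial strat a b q j γ
      = MixedProfile.condExpect q j γ₀ (socialCostExcept strat a b j)
        + 2 * expCost strat a b q j γ := fun γ => by
    rw [potFnPartial, condExpect_socialCost_add_strategyWeight strat a b (fun i => (hq i).2),
      MixedProfile.condExpect_eq_of_update q (socialCostExcept_update strat a b j) γ γ₀]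
  simp only [hpartial]
  exact sum_mul_sub_mul_add_two_mul_eq (hq j).2 _

omit [Fintype E] in
theorem sum_sq_expCost_sub_eq_zero_iff_isFixedPt {q : ∀ i, S i → ℝ} (hq : inSimplex q) :
    ∑ i, ∑ γ, ∑ γ', q i γ * q i γ' *
        (expCost strat a b q i γ - expCost strat a b q i γ') ^ 2 = 0 ↔ isFixedPt strat a b q := by
  rw [sum_eq_zero_iff_of_nonneg fun i _ => sum_sum_mul_mul_sq_sub_nonneg (hq i).1]
  exact forall_congr' fun i =>
    (imp_iff_right (mem_univ i)).trans (sum_sum_mul_mul_sq_sub_eq_zero_iff (hq i).2 (hq i).1)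

end CongestionGame

theorem potential_strictly_decreasing_general
    (strat : ∀ i, S i → Finset E) (a b : E → ℝ)
    (p : ℝ → ∀ i, S i → ℝ)
    (hsol : isReplicatorSol strat a b p)
    (t : ℝ) (ht : 0 ≤ t) :
    HasDerivAt (fun τ => potFn strat a b (p τ))
      (-∑ i, ∑ γ, ∑ γ', p t i γ * p t i γ' *
        (expCost strat a b (p t) i γ - expCost strat a b (p t) i γ') ^ 2) t ∧
    (-∑ i, ∑ γ, ∑ γ', p t i γ * p t i γ' *
        (expCost strat a b (p t) i γ - expCost strat a b (p t) i γ') ^ 2) ≤ 0 ∧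
    ((-∑ i, ∑ γ, ∑ γ', p t i γ * p t i γ' *
        (expCost strat a b (p t) i γ - expCost strat a b (p t) i γ') ^ 2) = 0 ↔
      isFixedPt strat a b (p t)) := by
  obtain ⟨hsimplex, hode⟩ := hsol
  have hq := hsimplex t ht
  refine ⟨?_, ?_, ?_⟩
  · rw [← sum_replicator_mul_potFnPartial strat a b hq]
    exact hasDerivAt_potFn strat a b (hode t ht)
  · exact neg_nonpos.mpr (sum_nonneg fun i _ => sum_sum_mul_mul_sq_sub_nonneg (hq i).1)
  · rw [neg_eq_zero]
    exact sum_sq_expCost_sub_eq_zero_iff_isFixedPt strat a b hq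

/-- **The potential decreases along replicator trajectories.**
Along any solution `p(t)` of the replicator dynamics in a linear congestion game,
`dΨ(p(t))/dt = -Σ_i Σ_{γ,γ'} p_{iγ} p_{iγ'} (c_{iγ}(p) - c_{iγ'}(p))² ≤ 0`,
with equality at time `t` if and only if `p(t)` is a fixed point of the
replicator dynamics. -/
theorem potential_strictly_decreasing
    (strat : ∀ i, S i → Finset E) (a b : E → ℝ)
    (ha : ∀ e, 0 ≤ a e) (hb : ∀ e, 0 ≤ b e)
    (hcard : ∀ i, 2 ≤ Fintype.card (S i))
    (p : ℝ → ∀ i, S i → ℝ)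
    (hsol : isReplicatorSol strat a b p)
    (t : ℝ) (ht : 0 ≤ t) :
    HasDerivAt (fun τ => potFn strat a b (p τ))
      (-∑ i, ∑ γ, ∑ γ', p t i γ * p t i γ' *
        (expCost strat a b (p t) i γ - expCost strat a b (p t) i γ') ^ 2) t ∧
    (-∑ i, ∑ γ, ∑ γ', p t i γ * p t i γ' *
        (expCost strat a b (p t) i γ - expCost strat a b (p t) i γ') ^ 2) ≤ 0 ∧
    ((-∑ i, ∑ γ, ∑ γ', p t i γ * p t i γ' *
        (expCost strat a b (p t) i γ - expCost strat a b (p t) i γ') ^ 2) = 0 ↔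
      isFixedPt strat a b (p t)) :=
  potential_strictly_decreasing_general strat a b p hsol t ht
end

section
/- Let q be a fixed point of the replicator dynamics of a linear congestion game and let p(t) be a solution that remains in the interior of Δ for all t. Define the relative entropy I(p) = −Σ_i Σ_{γ: q_{iγ}>0} q_{iγ} ln(p_{iγ}/q_{iγ}), which satisfies I(p) ≥ 0 with equality iff p = q. Then dI(p(t))/dt = Ψ(q) − Ψ(p(t)) − Σ_{i,γ} p_{iγ}(t)(d̂_i − d_{iγ}), where d_{iγ} = c_{iγ}(q), d̂_i = ĉ_i(q), and Ψ(p) = Σ_i ĉ_i(p) + Σ_{i,γ∈S_i} Σ_{e∈γ}(a_e + b_e) p_{iγ}. -/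
open Filter Topology Finset MeasureTheory

variable {N E : Type} [Fintype N] [DecidableEq N] [Fintype E] [DecidableEq E]
  {S : N → Type} [∀ i, Fintype (S i)] [∀ i, DecidableEq (S i)]

/-- The relative entropy `I(p) = -Σ_i Σ_{γ : q_{iγ} > 0} q_{iγ} ln(p_{iγ}/q_{iγ})`
with respect to a point `q`. -/
noncomputable def relEnt (q p : ∀ i, S i → ℝ) : ℝ :=
  -∑ i, ∑ γ, if 0 < q i γ then q i γ * Real.log (p i γ / q i γ) else 0

/-!
Along the replicator flow `d/dt log p_{iγ} = ĉ_i(p) - c_{iγ}(p)`, so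
`dI/dt = Σ_{i,γ} q_{iγ} c_{iγ}(p) - Σ_i ĉ_i(p)`. With linear costs the expected cost of `γ`
against `p` is `Σ_{e∈γ} (a_e + b_e + a_e Σ_{j≠i} m_j(e))`, where `m_j(e)` is the probability
that player `j` uses `e`. Hence `Σ q·c(p) - Σ_{i,γ} w_{iγ} q_{iγ}`, with
`w_{iγ} = Σ_{e∈γ} (a_e + b_e)`, is the symmetric expression `Σ_e a_e Σ_{i≠j} m^q_i(e) m^p_j(e)`,
and exchanging `p` and `q` in it turns `dI/dt` into the stated expression in `Ψ`.
Nonnegativity of `I` is Gibbs' inequality, from `log x ≤ x - 1` with equality only at `x = 1`.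
-/

section ProductWeights

variable {ι R : Type*} [Fintype ι] [DecidableEq ι] [CommSemiring R]
  {κ : ι → Type*} [∀ i, Fintype (κ i)]

theorem sum_prod_eq_one (u : ∀ i, κ i → R) (hu : ∀ i, ∑ δ, u i δ = 1) :
    ∑ s : ∀ i, κ i, ∏ i, u i (s i) = 1 := by
  rw [← Fintype.prod_sum, prod_eq_one fun i _ => hu i]

theorem sum_prod_mul_apply (u : ∀ i, κ i → R) (hu : ∀ i, ∑ δ, u i δ = 1) (k : ι)
    (f : κ k → R) :
    ∑ s : ∀ i, κ i, (∏ i, u i (s i)) * f (s k) = ∑ δ, u k δ * f δ := by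
  set v := Function.update u k fun δ => u k δ * f δ
  have hv : ∀ i ∈ univ.erase k, v i = u i := fun i hi =>
    Function.update_of_ne (ne_of_mem_erase hi) _ _
  have hvk : v k = fun δ => u k δ * f δ := Function.update_self ..
  have hprod : ∀ s : ∀ i, κ i, (∏ i, u i (s i)) * f (s k) = ∏ i, v i (s i) := fun s => by
    rw [← mul_prod_erase _ _ (mem_univ k),
      ← mul_prod_erase _ (fun i => v i (s i)) (mem_univ k),
      prod_congr rfl fun i hi => congrFun (hv i hi) (s i), hvk]
    ring
  simp_rw [hprod, ← Fintype.prod_sum]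
  rw [← mul_prod_erase _ _ (mem_univ k),
    prod_eq_one fun i hi => (hv i hi).symm ▸ hu i, mul_one, hvk]

end ProductWeights

theorem sum_mul_sum_erase_comm {ι R : Type*} [Fintype ι] [DecidableEq ι] [CommRing R]
    (x y : ι → R) :
    ∑ i, x i * ∑ j ∈ univ.erase i, y j = ∑ i, y i * ∑ j ∈ univ.erase i, x j := by
  simp only [sum_erase_eq_sub (mem_univ _), mul_sub, sum_sub_distrib, ← sum_mul]
  rw [mul_comm (∑ j, x j), sum_congr rfl fun i _ => mul_comm (x i) (y i)]

theorem sum_mul_const_sub_of_sum_eq_one {ι R : Type*} [Fintype ι] [CommRing R] {r : ι → R}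
    (hr : ∑ i, r i = 1) (c : R) (f : ι → R) :
    ∑ i, r i * (c - f i) = c - ∑ i, r i * f i := by
  simp only [mul_sub, sum_sub_distrib, ← sum_mul, hr, one_mul]

section CongestionGame

variable (strat : ∀ i, S i → Finset E) (a b : E → ℝ)

def useProb (p : ∀ i, S i → ℝ) (j : N) (e : E) : ℝ :=
  ∑ δ, if e ∈ strat j δ then p j δ else 0

theorem sum_prod_mul_resLoad (u : ∀ i, S i → ℝ) (hu : ∀ i, ∑ δ, u i δ = 1) (e : E) :
    ∑ s : ∀ i, S i, (∏ j, u j (s j)) * (resLoad strat s e : ℝ) = ∑ j, useProb strat u j e := by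
  simp only [resLoad, card_filter, Nat.cast_sum, Nat.cast_ite, Nat.cast_one,
    Nat.cast_zero, mul_sum]
  rw [sum_comm]
  refine sum_congr rfl fun j _ => ?_
  rw [sum_prod_mul_apply u hu j (fun δ => if e ∈ strat j δ then 1 else 0)]
  simp only [useProb, mul_ite, mul_one, mul_zero]

/-- `update p i (Pi.single γ 1)` is `p` with player `i` switched to the pure strategy `γ`. -/
theorem expCost_eq_sum_prod_update (p : ∀ i, S i → ℝ) (i : N) (γ : S i) :
    expCost strat a b p i γ =
      ∑ s : ∀ j, S j, (∏ j, Function.update p i (Pi.single γ 1) j (s j)) *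
        ∑ e ∈ strat i γ, (a e * (resLoad strat s e : ℝ) + b e) := by
  refine sum_congr rfl fun s _ => ?_
  have hne : ∀ j ∈ univ.erase i, Function.update p i (Pi.single γ 1) j (s j) = p j (s j) :=
    fun j hj => by rw [Function.update_of_ne (ne_of_mem_erase hj)]
  rw [← mul_prod_erase _ _ (mem_univ i), Function.update_self,
    prod_congr rfl hne, Pi.single_apply]
  split_ifs with hs
  · rw [pureCost, hs, one_mul]
  · rw [zero_mul, zero_mul]

theorem expCost_eq_sum_useProb {p : ∀ i, S i → ℝ} (hp : ∀ j, ∑ δ, p j δ = 1) (i : N) (γ : S i) :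
    expCost strat a b p i γ =
      ∑ e ∈ strat i γ, (a e + b e + a e * ∑ j ∈ univ.erase i, useProb strat p j e) := by
  rw [expCost_eq_sum_prod_update]
  set u := Function.update p i (Pi.single γ 1)
  have hu_ne : ∀ j ∈ univ.erase i, u j = p j := fun j hj =>
    Function.update_of_ne (ne_of_mem_erase hj) _ _
  have hu_self : u i = Pi.single γ 1 := Function.update_self ..
  have hu : ∀ j, ∑ δ, u j δ = 1 := fun j => by
    by_cases hj : j = i
    · subst hj; simp [hu_self]
    · rw [hu_ne j (mem_erase.2 ⟨hj, mem_univ j⟩), hp j]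
  have hload : ∀ e ∈ strat i γ,
      ∑ s : ∀ j, S j, (∏ j, u j (s j)) * (resLoad strat s e : ℝ) =
        1 + ∑ j ∈ univ.erase i, useProb strat p j e := fun e he => by
    have huse : ∀ j ∈ univ.erase i, useProb strat u j e = useProb strat p j e :=
      fun j hj => by simp only [useProb, hu_ne j hj]
    rw [sum_prod_mul_resLoad strat u hu, ← add_sum_erase _ _ (mem_univ i),
      sum_congr rfl huse]
    congr 1
    rw [useProb, Fintype.sum_eq_single γ fun δ hδ => by simp [hu_self, hδ]]
    simp [hu_self, he]
  simp_rw [mul_sum]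
  rw [sum_comm]
  refine sum_congr rfl fun e he => ?_
  simp only [mul_add, sum_add_distrib, mul_left_comm _ (a e), ← mul_sum,
    ← sum_mul, hload e he, sum_prod_eq_one u hu]
  ring

theorem sum_useProb_mul (r : ∀ i, S i → ℝ) (i : N) (g : E → ℝ) :
    ∑ e, useProb strat r i e * g e = ∑ γ, r i γ * ∑ e ∈ strat i γ, g e := by
  simp only [useProb, sum_mul, ite_mul, zero_mul, mul_sum]
  rw [sum_comm]
  exact sum_congr rfl fun γ _ => Fintype.sum_ite_mem _ _

theorem sum_mul_expCost {p : ∀ i, S i → ℝ} (hp : ∀ j, ∑ δ, p j δ = 1) (r : ∀ i, S i → ℝ) :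
    ∑ i, ∑ γ, r i γ * expCost strat a b p i γ =
      ∑ i, ∑ γ, (∑ e ∈ strat i γ, (a e + b e)) * r i γ +
        ∑ e, a e * ∑ i, useProb strat r i e * ∑ j ∈ univ.erase i, useProb strat p j e := by
  have hi : ∀ i, ∑ γ, r i γ * expCost strat a b p i γ =
      ∑ γ, (∑ e ∈ strat i γ, (a e + b e)) * r i γ +
        ∑ e, useProb strat r i e * (a e * ∑ j ∈ univ.erase i, useProb strat p j e) :=
    fun i => by
      rw [sum_useProb_mul, ← sum_add_distrib]
      refine sum_congr rfl fun γ _ => ?_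
      rw [expCost_eq_sum_useProb strat a b hp, mul_comm _ (r i γ), ← mul_add,
        ← sum_add_distrib]
  rw [sum_congr rfl fun i _ => hi i, sum_add_distrib, sum_comm (s := univ)]
  simp only [mul_sum, mul_left_comm (a _)]

theorem sum_mul_expCost_add_comm {p r : ∀ i, S i → ℝ} (hp : ∀ j, ∑ δ, p j δ = 1)
    (hr : ∀ j, ∑ δ, r j δ = 1) :
    ∑ i, ∑ γ, r i γ * expCost strat a b p i γ + ∑ i, ∑ γ, (∑ e ∈ strat i γ, (a e + b e)) * p i γ =
      ∑ i, ∑ γ, p i γ * expCost strat a b r i γ +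
        ∑ i, ∑ γ, (∑ e ∈ strat i γ, (a e + b e)) * r i γ := by
  have hcomm := fun e =>
    sum_mul_sum_erase_comm (fun i => useProb strat r i e) (fun i => useProb strat p i e)
  simp only [sum_mul_expCost strat a b hp, sum_mul_expCost strat a b hr, hcomm]
  ring

theorem potFn_sub_potFn_sub_sum_eq {p q : ∀ i, S i → ℝ} (hp : ∀ j, ∑ δ, p j δ = 1)
    (hq : ∀ j, ∑ δ, q j δ = 1) :
    potFn strat a b q - potFn strat a b p -
        ∑ i, ∑ γ, p i γ * (avgCost strat a b q i - expCost strat a b q i γ) =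
      -∑ i, ∑ γ, q i γ * (avgCost strat a b p i - expCost strat a b p i γ) := by
  have hsymm := sum_mul_expCost_add_comm strat a b hp hq
  simp only [potFn, sum_mul_const_sub_of_sum_eq_one (hp _), sum_mul_const_sub_of_sum_eq_one (hq _),
    sum_sub_distrib]
  linarith

end CongestionGame

noncomputable def relEntTerm (x y : ℝ) : ℝ :=
  if 0 < x then x * Real.log (y / x) else 0

theorem relEnt_eq_neg_sum_relEntTerm (q p : ∀ i, S i → ℝ) :
    relEnt q p = -∑ i, ∑ γ, relEntTerm (q i γ) (p i γ) := rfl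

theorem relEntTerm_self (x : ℝ) : relEntTerm x x = 0 := by
  unfold relEntTerm
  split_ifs with hx
  · rw [div_self hx.ne', Real.log_one, mul_zero]
  · rfl

theorem relEntTerm_lt_sub {x y : ℝ} (hy : 0 < y) (hxy : y ≠ x) :
    relEntTerm x y < y - x := by
  unfold relEntTerm
  split_ifs with hx'
  · have hlog := Real.log_lt_sub_one_of_pos (div_pos hy hx')
      (by rwa [ne_eq, div_eq_one_iff_eq hx'.ne'])
    calc x * Real.log (y / x) < x * (y / x - 1) := mul_lt_mul_of_pos_left hlog hx'
      _ = y - x := by field_simp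
  · linarith [not_lt.1 hx']

theorem relEntTerm_le_sub {x y : ℝ} (hy : 0 < y) : relEntTerm x y ≤ y - x := by
  rcases eq_or_ne y x with rfl | hxy
  · rw [relEntTerm_self, sub_self]
  · exact (relEntTerm_lt_sub hy hxy).le

theorem relEntTerm_eq_sub_iff {x y : ℝ} (hy : 0 < y) :
    relEntTerm x y = y - x ↔ y = x := by
  refine ⟨fun h => by_contra fun hxy => (relEntTerm_lt_sub hy hxy).ne h, ?_⟩
  rintro rfl
  rw [relEntTerm_self, sub_self]

theorem relEnt_nonneg_and_eq_zero_iff {q p : ∀ i, S i → ℝ} (hq : ∀ i, ∑ γ, q i γ = 1)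
    (hp : ∀ i, ∑ γ, p i γ = 1) (hpos : ∀ i γ, 0 < p i γ) :
    0 ≤ relEnt q p ∧ (relEnt q p = 0 ↔ p = q) := by
  have hgap : ∀ i γ, 0 ≤ p i γ - q i γ - relEntTerm (q i γ) (p i γ) := fun i γ =>
    sub_nonneg.2 (relEntTerm_le_sub (hpos i γ))
  have hrelEnt : relEnt q p = ∑ i, ∑ γ, (p i γ - q i γ - relEntTerm (q i γ) (p i γ)) := by
    simp [relEnt_eq_neg_sum_relEntTerm, sum_sub_distrib, hp, hq]
  refine ⟨hrelEnt ▸ sum_nonneg fun i _ => sum_nonneg fun γ _ => hgap i γ, ?_⟩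
  rw [hrelEnt, sum_eq_zero_iff_of_nonneg fun i _ => sum_nonneg fun γ _ => hgap i γ]
  simp only [mem_univ, true_implies,
    sum_eq_zero_iff_of_nonneg fun γ _ => hgap _ γ, sub_eq_zero, funext_iff]
  exact forall_congr' fun i => forall_congr' fun γ =>
    eq_comm.trans (relEntTerm_eq_sub_iff (hpos i γ))

theorem hasDerivAt_relEntTerm {x : ℝ} (hx : 0 ≤ x) {f : ℝ → ℝ} {f' t : ℝ} (hf : HasDerivAt f f' t)
    (hft : 0 < f t) : HasDerivAt (fun τ => relEntTerm x (f τ)) (x * (f' / f t)) t := by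
  rcases hx.eq_or_lt with rfl | hx
  · simpa [relEntTerm] using hasDerivAt_const t (0 : ℝ)
  · simp only [relEntTerm, if_pos hx]
    have h := ((hf.div_const x).log (div_pos hft hx).ne').const_mul x
    rwa [div_div_div_cancel_right₀ hx.ne'] at h

theorem hasDerivAt_relEnt {q : ∀ i, S i → ℝ} (hq : ∀ i γ, 0 ≤ q i γ) {p : ℝ → ∀ i, S i → ℝ}
    {p' : ∀ i, S i → ℝ} {t : ℝ} (hp : ∀ i γ, HasDerivAt (fun τ => p τ i γ) (p' i γ) t)
    (hpos : ∀ i γ, 0 < p t i γ) :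
    HasDerivAt (fun τ => relEnt q (p τ)) (-∑ i, ∑ γ, q i γ * (p' i γ / p t i γ)) t :=
  (HasDerivAt.fun_sum fun i _ => HasDerivAt.fun_sum fun γ _ =>
    hasDerivAt_relEntTerm (hq i γ) (hp i γ) (hpos i γ)).neg

theorem relEnt_deriv_along_replicator_general
    (strat : ∀ i, S i → Finset E) (a b : E → ℝ)
    (q : ∀ i, S i → ℝ) (hq : inSimplex q)
    (p : ℝ → ∀ i, S i → ℝ)
    (hpΔ : ∀ t, inSimplex (p t)) (hppos : ∀ t i (γ : S i), 0 < p t i γ)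
    (hode : ∀ t, ∀ i (γ : S i),
      HasDerivAt (fun τ => p τ i γ)
        (p t i γ * (avgCost strat a b (p t) i - expCost strat a b (p t) i γ)) t) :
    (∀ p' : ∀ i, S i → ℝ, inSimplex p' → (∀ i γ, 0 < p' i γ) →
      0 ≤ relEnt q p' ∧ (relEnt q p' = 0 ↔ p' = q)) ∧
    ∀ t : ℝ, HasDerivAt (fun τ => relEnt q (p τ))
      (potFn strat a b q - potFn strat a b (p t)
        - ∑ i, ∑ γ, p t i γ * (avgCost strat a b q i - expCost strat a b q i γ)) t := by
  refine ⟨fun p' hp' hpos' =>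
    relEnt_nonneg_and_eq_zero_iff (fun i => (hq i).2) (fun i => (hp' i).2) hpos', fun t => ?_⟩
  rw [potFn_sub_potFn_sub_sum_eq strat a b (fun i => (hpΔ t i).2) (fun i => (hq i).2)]
  convert hasDerivAt_relEnt (fun i => (hq i).1) (hode t) (hppos t) using 5
  rw [mul_div_cancel_left₀ _ (hppos t _ _).ne']

/-- **Derivative of the relative entropy along replicator trajectories.**
For a fixed point `q` of the replicator dynamics of a linear congestion game and
a solution `p(t)` remaining in the interior of `Δ` for all `t`, the relative
entropy satisfies `I ≥ 0` with equality exactly at `q`, and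
`dI(p(t))/dt = Ψ(q) - Ψ(p(t)) - Σ_{i,γ} p_{iγ}(t)(d̂_i - d_{iγ})`
with `d_{iγ} = c_{iγ}(q)` and `d̂_i = ĉ_i(q)`. -/
theorem relEnt_deriv_along_replicator
    (strat : ∀ i, S i → Finset E) (a b : E → ℝ)
    (ha : ∀ e, 0 ≤ a e) (hb : ∀ e, 0 ≤ b e)
    (hcard : ∀ i, 2 ≤ Fintype.card (S i))
    (q : ∀ i, S i → ℝ) (hq : inSimplex q) (hqfix : isFixedPt strat a b q)
    (p : ℝ → ∀ i, S i → ℝ)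
    (hpΔ : ∀ t, inSimplex (p t)) (hppos : ∀ t i (γ : S i), 0 < p t i γ)
    (hode : ∀ t, ∀ i (γ : S i),
      HasDerivAt (fun τ => p τ i γ)
        (p t i γ * (avgCost strat a b (p t) i - expCost strat a b (p t) i γ)) t) :
    (∀ p' : ∀ i, S i → ℝ, inSimplex p' → (∀ i γ, 0 < p' i γ) →
      0 ≤ relEnt q p' ∧ (relEnt q p' = 0 ↔ p' = q)) ∧
    ∀ t : ℝ, HasDerivAt (fun τ => relEnt q (p τ))
      (potFn strat a b q - potFn strat a b (p t)
        - ∑ i, ∑ γ, p t i γ * (avgCost strat a b q i - expCost strat a b q i γ)) t :=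
  relEnt_deriv_along_replicator_general strat a b q hq p hpΔ hppos hode
end

section
/- Consider the planar ODE ẋ = x(1−x)(3y−2), ẏ = y(1−y)(3x−2) on (0,1)². For every solution (x(t), y(t)) : [0,∞) → (0,1)² whose initial condition satisfies y(0) < (1/2)(1 − x(0) + √(1 + 2x(0) − 3x(0)²)), we have (x(t), y(t)) → (0,0) as t → ∞. -/
/-!
The flow has the first integral `y²(1-y) / (x²(1-x))`, and the curve of the statement is the
zero set of `Q = x² + xy + y² - x - y`, the stable manifold of the saddle `(2/3, 2/3)`. Since
`Q' = (4x + 4y - 6xy - 2) Q`, the sign of `Q` is preserved, so the solution stays in `{Q < 0}`,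
where the two coordinates are never both `≥ 2/3`. If the solution never entered the square
`(0, 2/3)²`, one coordinate would stay below `2/3` and the other above, both would be monotone,
and the solution would converge to `(2/3, 2/3)`; the first integral would then put the initial
point on `{Q = 0} ∪ {x = y}`. Once in the square the solution stays there, because
`(2 - 3x)(2 - 3y)` is nondecreasing; both coordinates then decrease, and the only equilibrium
they can converge to is `(0, 0)`.
-/

open Filter Topology Set

theorem eq_zero_of_hasDerivAt_mul_self_of_eq_zero_left {v g : ℝ → ℝ} {K a b : ℝ}
    (hab : a ≤ b) (hg : ∀ t ∈ Icc a b, |g t| ≤ K)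
    (hv : ∀ t ∈ Icc a b, HasDerivAt v (g t * v t) t) (hb : v b = 0) : v a = 0 := by
  have hlip : ∀ t ∈ Ioc a b, LipschitzOnWith K.toNNReal (fun u => g t * u) univ :=
    fun t ht => LipschitzOnWith.of_dist_le_mul fun u _ w _ => by
      rw [Real.dist_eq, Real.dist_eq, ← mul_sub, abs_mul]
      exact mul_le_mul_of_nonneg_right ((hg t (Ioc_subset_Icc_self ht)).trans
        (Real.le_coe_toNNReal K)) (abs_nonneg _)
  refine ODE_solution_unique_of_mem_Icc_left hlip
    (fun t ht => (hv t ht).continuousAt.continuousWithinAt)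
    (fun t ht => (hv t (Ioc_subset_Icc_self ht)).hasDerivWithinAt) (fun _ _ => mem_univ _)
    (g := fun _ => 0) continuousOn_const
    (fun t _ => by simpa only [mul_zero] using hasDerivWithinAt_const t _ (0 : ℝ))
    (fun _ _ => mem_univ _) hb (left_mem_Icc.2 hab)

theorem monotoneOn_Ici_of_hasDerivAt_nonneg {f f' : ℝ → ℝ} {a : ℝ}
    (hf : ∀ t ∈ Ici a, HasDerivAt f (f' t) t) (hf' : ∀ t ∈ Ici a, 0 ≤ f' t) :
    MonotoneOn f (Ici a) :=
  monotoneOn_of_hasDerivWithinAt_nonneg (convex_Ici a)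
    (fun t ht => (hf t ht).continuousAt.continuousWithinAt)
    (fun t ht => (hf t (interior_subset ht)).hasDerivWithinAt)
    (fun t ht => hf' t (interior_subset ht))

theorem antitoneOn_Ici_of_hasDerivAt_nonpos {f f' : ℝ → ℝ} {a : ℝ}
    (hf : ∀ t ∈ Ici a, HasDerivAt f (f' t) t) (hf' : ∀ t ∈ Ici a, f' t ≤ 0) :
    AntitoneOn f (Ici a) :=
  antitoneOn_of_hasDerivWithinAt_nonpos (convex_Ici a)
    (fun t ht => (hf t ht).continuousAt.continuousWithinAt)
    (fun t ht => (hf t (interior_subset ht)).hasDerivWithinAt)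
    (fun t ht => hf' t (interior_subset ht))

theorem MonotoneOn.exists_tendsto_atTop {f : ℝ → ℝ} {a M : ℝ} (hf : MonotoneOn f (Ici a))
    (hM : ∀ t ∈ Ici a, f t ≤ M) : ∃ l ∈ Icc (f a) M, Tendsto f atTop (𝓝 l) := by
  have hmono : Monotone fun t => f (max a t) := fun s t hst =>
    hf (le_max_left a s) (le_max_left a t) (max_le_max_left a hst)
  have hlim : Tendsto f atTop (𝓝 (⨆ t, f (max a t))) := by
    refine (tendsto_atTop_ciSup hmono ⟨M, ?_⟩).congr' ?_
    · rintro _ ⟨t, rfl⟩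
      exact hM _ (le_max_left a t)
    · filter_upwards [eventually_ge_atTop a] with t ht
      rw [max_eq_right ht]
  refine ⟨_, ⟨ge_of_tendsto hlim ?_, le_of_tendsto hlim ?_⟩, hlim⟩ <;>
    filter_upwards [eventually_ge_atTop a] with t ht
  exacts [hf self_mem_Ici ht ht, hM t ht]

theorem AntitoneOn.exists_tendsto_atTop {f : ℝ → ℝ} {a m : ℝ} (hf : AntitoneOn f (Ici a))
    (hm : ∀ t ∈ Ici a, m ≤ f t) : ∃ l ∈ Icc m (f a), Tendsto f atTop (𝓝 l) := by
  obtain ⟨l, ⟨hl₁, hl₂⟩, hl⟩ :=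
    MonotoneOn.exists_tendsto_atTop (f := fun t => -f t) (M := -m)
      (fun s hs t ht hst => neg_le_neg (hf hs ht hst)) (fun t ht => neg_le_neg (hm t ht))
  exact ⟨-l, ⟨le_neg.2 hl₂, neg_le.2 hl₁⟩, by simpa using hl.neg⟩

theorem eq_zero_of_tendsto_of_hasDerivAt {f f' : ℝ → ℝ} {a l L : ℝ}
    (hf' : ∀ t ∈ Ici a, HasDerivAt f (f' t) t) (hf : Tendsto f atTop (𝓝 l))
    (hL : Tendsto f' atTop (𝓝 L)) : L = 0 := by
  have hmvt : ∀ t, ∃ c, a ≤ t → t ≤ c ∧ f' c = f (t + 1) - f t := by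
    intro t
    by_cases ht : a ≤ t
    · obtain ⟨c, hc, hfc⟩ := exists_hasDerivAt_eq_slope f f' (lt_add_one t)
        (fun s hs => (hf' s (ht.trans hs.1)).continuousAt.continuousWithinAt)
        (fun s hs => hf' s (ht.trans hs.1.le))
      exact ⟨c, fun _ => ⟨hc.1.le, by simpa using hfc⟩⟩
    · exact ⟨0, fun h => absurd h ht⟩
  choose c hc using hmvt
  have hc_top : Tendsto c atTop atTop := tendsto_atTop_mono' _
    (by filter_upwards [eventually_ge_atTop a] with t ht using (hc t ht).1) tendsto_id
  have hdiff : Tendsto (fun t => f' (c t)) atTop (𝓝 (l - l)) := by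
    refine ((hf.comp (tendsto_atTop_add_const_right _ 1 tendsto_id)).sub hf).congr' ?_
    filter_upwards [eventually_ge_atTop a] with t ht
    exact (hc t ht).2.symm
  simpa using tendsto_nhds_unique (hL.comp hc_top) hdiff

namespace StagHunt

def drift (x y : ℝ) : ℝ := x * (1 - x) * (3 * y - 2)

theorem drift_eq_zero_iff {x y : ℝ} : drift x y = 0 ↔ x = 0 ∨ x = 1 ∨ y = 2 / 3 := by
  simp only [drift, mul_eq_zero, sub_eq_zero, or_assoc]
  grind

/-- Its zero set in `(0,1)²` is the stable manifold of the mixed equilibrium `(2/3, 2/3)`. -/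
def separatrix (x y : ℝ) : ℝ := x ^ 2 + x * y + y ^ 2 - x - y

theorem separatrix_comm (x y : ℝ) : separatrix x y = separatrix y x := by
  unfold separatrix; ring

theorem separatrix_nonneg {x y : ℝ} (hx : 2 / 3 ≤ x) (hy : 2 / 3 ≤ y) :
    0 ≤ separatrix x y := by
  unfold separatrix; nlinarith

theorem separatrix_neg_of_lt {x y : ℝ} (hx : x ∈ Ioo (0 : ℝ) 1) (hy : 0 < y)
    (h : y < 1 / 2 * (1 - x + √(1 + 2 * x - 3 * x ^ 2))) : separatrix x y < 0 := by
  obtain ⟨hx₀, hx₁⟩ := hx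
  set s := √(1 + 2 * x - 3 * x ^ 2)
  have hs : s ^ 2 = 1 + 2 * x - 3 * x ^ 2 := Real.sq_sqrt (by nlinarith)
  have hs₁ : 1 - x ≤ s := Real.le_sqrt_of_sq_le (by nlinarith)
  -- the two roots in `y` of `separatrix x y = 0` are `(1 - x ± s) / 2`
  have hfactor : 4 * separatrix x y = (2 * y - 1 + x - s) * (2 * y - 1 + x + s) := by
    unfold separatrix; linear_combination hs
  nlinarith [mul_neg_of_neg_of_pos (by linarith : 2 * y - 1 + x - s < 0)
    (by linarith : 0 < 2 * y - 1 + x + s)]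

theorem sub_mul_separatrix (x y : ℝ) :
    (x - y) * separatrix x y = y ^ 2 * (1 - y) - x ^ 2 * (1 - x) := by
  unfold separatrix; ring

/-- In the coordinates `u = log (x / (1 - x))`, `v = log (y / (1 - y))` the flow reads
`u̇ = 3y - 2`, `v̇ = 3x - 2`, which integrates to this conserved quantity. -/
noncomputable def firstIntegral (x y : ℝ) : ℝ := y ^ 2 * (1 - y) / (x ^ 2 * (1 - x))

structure IsSolution (x y : ℝ → ℝ) : Prop where
  mem : ∀ t : ℝ, 0 ≤ t → x t ∈ Ioo (0 : ℝ) 1 ∧ y t ∈ Ioo (0 : ℝ) 1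
  hasDerivAt_fst : ∀ t : ℝ, 0 ≤ t → HasDerivAt x (drift (x t) (y t)) t
  hasDerivAt_snd : ∀ t : ℝ, 0 ≤ t → HasDerivAt y (drift (y t) (x t)) t

namespace IsSolution

variable {x y : ℝ → ℝ} (h : IsSolution x y)
include h

theorem swap : IsSolution y x :=
  ⟨fun t ht => (h.mem t ht).symm, h.hasDerivAt_snd, h.hasDerivAt_fst⟩

theorem continuousOn_fst : ContinuousOn x (Ici 0) :=
  fun t ht => (h.hasDerivAt_fst t ht).continuousAt.continuousWithinAt

theorem antitoneOn_fst {T : ℝ} (hT : 0 ≤ T) (hy : ∀ t ∈ Ici T, y t ≤ 2 / 3) :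
    AntitoneOn x (Ici T) :=
  antitoneOn_Ici_of_hasDerivAt_nonpos (fun t ht => h.hasDerivAt_fst t (hT.trans ht)) fun t ht => by
    obtain ⟨⟨hx₀, hx₁⟩, -⟩ := h.mem t (hT.trans ht)
    exact mul_nonpos_of_nonneg_of_nonpos (mul_pos hx₀ (sub_pos.2 hx₁)).le
      (by linarith [hy t ht])

theorem monotoneOn_fst {T : ℝ} (hT : 0 ≤ T) (hy : ∀ t ∈ Ici T, 2 / 3 ≤ y t) :
    MonotoneOn x (Ici T) :=
  monotoneOn_Ici_of_hasDerivAt_nonneg (fun t ht => h.hasDerivAt_fst t (hT.trans ht)) fun t ht => by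
    obtain ⟨⟨hx₀, hx₁⟩, -⟩ := h.mem t (hT.trans ht)
    exact mul_nonneg (mul_pos hx₀ (sub_pos.2 hx₁)).le (by linarith [hy t ht])

theorem drift_eq_zero_of_tendsto {a b : ℝ} (ha : Tendsto x atTop (𝓝 a))
    (hb : Tendsto y atTop (𝓝 b)) : drift a b = 0 :=
  eq_zero_of_tendsto_of_hasDerivAt (a := 0) h.hasDerivAt_fst ha
    ((ha.mul (tendsto_const_nhds.sub ha)).mul ((hb.const_mul 3).sub_const 2))

theorem hasDerivAt_separatrix {t : ℝ} (ht : 0 ≤ t) :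
    HasDerivAt (fun s => separatrix (x s) (y s))
      ((4 * x t + 4 * y t - 6 * x t * y t - 2) * separatrix (x t) (y t)) t := by
  have hx := h.hasDerivAt_fst t ht
  have hy := h.hasDerivAt_snd t ht
  refine (((((hx.pow 2).add (hx.mul hy)).add (hy.pow 2)).sub hx).sub hy).congr_deriv ?_
  simp only [drift, separatrix]
  ring

theorem separatrix_neg (h₀ : separatrix (x 0) (y 0) < 0) {t : ℝ} (ht : 0 ≤ t) :
    separatrix (x t) (y t) < 0 := by
  have hrate : ∀ s ∈ Ici (0 : ℝ), |4 * x s + 4 * y s - 6 * x s * y s - 2| ≤ 2 := by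
    intro s hs
    obtain ⟨⟨hx₀, hx₁⟩, hy₀, hy₁⟩ := h.mem s hs
    have h₁ := mul_pos hx₀ (sub_pos.2 hy₁)
    have h₂ := mul_pos hy₀ (sub_pos.2 hx₁)
    have h₃ := mul_pos (sub_pos.2 hx₁) (sub_pos.2 hy₁)
    rw [abs_le]
    constructor <;> nlinarith [mul_pos hx₀ hy₀]
  have hne : ∀ s ∈ Ici (0 : ℝ), separatrix (x s) (y s) ≠ 0 := fun s hs hs₀ =>
    h₀.ne <| eq_zero_of_hasDerivAt_mul_self_of_eq_zero_left
      (v := fun s => separatrix (x s) (y s)) hs (fun r hr => hrate r hr.1)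
      (fun r hr => h.hasDerivAt_separatrix hr.1) hs₀
  exact isPreconnected_Ici.gt_of_ne
    (fun s hs => (h.hasDerivAt_separatrix hs).continuousAt.continuousWithinAt) hne
    ⟨0, self_mem_Ici, h₀⟩ ht

theorem hasDerivAt_firstIntegral {t : ℝ} (ht : 0 ≤ t) :
    HasDerivAt (fun s => firstIntegral (x s) (y s)) 0 t := by
  obtain ⟨⟨hx₀, hx₁⟩, -⟩ := h.mem t ht
  have hx := h.hasDerivAt_fst t ht
  have hy := h.hasDerivAt_snd t ht
  have hden : x t ^ 2 * (1 - x t) ≠ 0 := (mul_pos (pow_pos hx₀ 2) (sub_pos.2 hx₁)).ne'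
  refine (((hy.pow 2).mul (hy.const_sub 1)).div
    ((hx.pow 2).mul (hx.const_sub 1)) hden).congr_deriv ?_
  simp only [drift, Pi.pow_apply, Pi.mul_apply]
  field_simp
  ring

theorem firstIntegral_eq {t : ℝ} (ht : 0 ≤ t) :
    firstIntegral (x t) (y t) = firstIntegral (x 0) (y 0) :=
  constant_of_has_deriv_right_zero
    (fun _ hs => (h.hasDerivAt_firstIntegral hs.1).continuousAt.continuousWithinAt)
    (fun _ hs => (h.hasDerivAt_firstIntegral hs.1).hasDerivWithinAt) t ⟨ht, le_rfl⟩

theorem sub_mul_separatrix_eq_zero_of_tendsto (hx : Tendsto x atTop (𝓝 (2 / 3)))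
    (hy : Tendsto y atTop (𝓝 (2 / 3))) : (x 0 - y 0) * separatrix (x 0) (y 0) = 0 := by
  obtain ⟨⟨hx₀, hx₁⟩, -⟩ := h.mem 0 le_rfl
  have hlim : Tendsto (fun t => firstIntegral (x t) (y t)) atTop
      (𝓝 ((2 / 3) ^ 2 * (1 - 2 / 3) / ((2 / 3) ^ 2 * (1 - 2 / 3)))) :=
    ((hy.pow 2).mul (tendsto_const_nhds.sub hy)).div
      ((hx.pow 2).mul (tendsto_const_nhds.sub hx)) (by norm_num)
  rw [div_self (by norm_num)] at hlim
  have hconst : Tendsto (fun t => firstIntegral (x t) (y t)) atTop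
      (𝓝 (firstIntegral (x 0) (y 0))) :=
    tendsto_const_nhds.congr' <| (eventually_ge_atTop 0).mono fun t ht =>
      (h.firstIntegral_eq ht).symm
  have hone := tendsto_nhds_unique hconst hlim
  rw [firstIntegral, div_eq_one_iff_eq (mul_pos (pow_pos hx₀ 2) (sub_pos.2 hx₁)).ne'] at hone
  rw [sub_mul_separatrix, hone, sub_self]

theorem tendsto_twoThirds_of_forall_lt_le
    (hsep : ∀ t : ℝ, 0 ≤ t → x t < 2 / 3 ∧ 2 / 3 ≤ y t) :
    Tendsto x atTop (𝓝 (2 / 3)) ∧ Tendsto y atTop (𝓝 (2 / 3)) := by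
  obtain ⟨⟨hx₀, -⟩, -, hy₁⟩ := h.mem 0 le_rfl
  obtain ⟨a, ⟨ha₀, ha₁⟩, hxa⟩ :=
    (h.monotoneOn_fst le_rfl fun t ht => (hsep t ht).2).exists_tendsto_atTop
      fun t ht => (hsep t ht).1.le
  obtain ⟨b, ⟨hb₀, hb₁⟩, hyb⟩ :=
    (h.swap.antitoneOn_fst le_rfl fun t ht => (hsep t ht).1.le).exists_tendsto_atTop
      fun t ht => (hsep t ht).2
  have hb : b = 2 / 3 := by
    rcases drift_eq_zero_iff.1 (h.drift_eq_zero_of_tendsto hxa hyb) with h' | h' | h'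
    exacts [by linarith, by linarith, h']
  have ha : a = 2 / 3 := by
    rcases drift_eq_zero_iff.1 (h.swap.drift_eq_zero_of_tendsto hyb hxa) with h' | h' | h'
    exacts [by linarith, by linarith, h']
  exact ⟨ha ▸ hxa, hb ▸ hyb⟩

theorem fst_lt_twoThirds_of_ge {T : ℝ} (hT : 0 ≤ T) (hxT : x T < 2 / 3) (hyT : y T < 2 / 3)
    {t : ℝ} (ht : T ≤ t) : x t < 2 / 3 := by
  have hR : MonotoneOn (fun s => (2 - 3 * x s) * (2 - 3 * y s)) (Ici T) := by
    refine monotoneOn_Ici_of_hasDerivAt_nonneg (f' := fun s =>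
      3 * (x s * (1 - x s)) * (2 - 3 * y s) ^ 2 + 3 * (y s * (1 - y s)) * (2 - 3 * x s) ^ 2)
      (fun s hs => ?_) (fun s hs => ?_)
    · refine (((h.hasDerivAt_fst s (hT.trans hs)).const_mul 3 |>.const_sub 2).mul
        ((h.hasDerivAt_snd s (hT.trans hs)).const_mul 3 |>.const_sub 2)).congr_deriv ?_
      unfold drift
      ring
    · obtain ⟨⟨hx₀, hx₁⟩, hy₀, hy₁⟩ := h.mem s (hT.trans hs)
      have := mul_pos hx₀ (sub_pos.2 hx₁)
      have := mul_pos hy₀ (sub_pos.2 hy₁)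
      positivity
  have hne : ∀ s ∈ Ici T, x s ≠ 2 / 3 := fun s hs hxs => by
    have := (mul_pos (by linarith) (by linarith) : 0 < (2 - 3 * x T) * (2 - 3 * y T)).trans_le
      (hR self_mem_Ici hs hs)
    norm_num [hxs] at this
  exact isPreconnected_Ici.gt_of_ne (h.continuousOn_fst.mono (Ici_subset_Ici.2 hT)) hne
    ⟨T, self_mem_Ici, hxT⟩ ht

theorem tendsto_zero_of_lt_twoThirds {T : ℝ} (hT : 0 ≤ T) (hxT : x T < 2 / 3)
    (hyT : y T < 2 / 3) : Tendsto (fun t => (x t, y t)) atTop (𝓝 (0, 0)) := by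
  have hx_anti := h.antitoneOn_fst hT fun t ht => (h.swap.fst_lt_twoThirds_of_ge hT hyT hxT ht).le
  have hy_anti := h.swap.antitoneOn_fst hT fun t ht => (h.fst_lt_twoThirds_of_ge hT hxT hyT ht).le
  obtain ⟨a, ⟨-, ha⟩, hxa⟩ :=
    hx_anti.exists_tendsto_atTop fun t ht => (h.mem t (hT.trans ht)).1.1.le
  obtain ⟨b, ⟨-, hb⟩, hyb⟩ :=
    hy_anti.exists_tendsto_atTop fun t ht => (h.mem t (hT.trans ht)).2.1.le
  have ha : a = 0 := by
    rcases drift_eq_zero_iff.1 (h.drift_eq_zero_of_tendsto hxa hyb) with h' | h' | h'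
    exacts [h', by linarith, by linarith]
  have hb : b = 0 := by
    rcases drift_eq_zero_iff.1 (h.swap.drift_eq_zero_of_tendsto hyb hxa) with h' | h' | h'
    exacts [h', by linarith, by linarith]
  exact (ha ▸ hxa).prodMk_nhds (hb ▸ hyb)

theorem exists_lt_twoThirds (hQ : ∀ t : ℝ, 0 ≤ t → separatrix (x t) (y t) < 0) :
    ∃ T, 0 ≤ T ∧ x T < 2 / 3 ∧ y T < 2 / 3 := by
  by_contra! hout
  have hsplit : ∀ t : ℝ, 0 ≤ t →
      (x t < 2 / 3 ∧ 2 / 3 ≤ y t) ∨ (y t < 2 / 3 ∧ 2 / 3 ≤ x t) := by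
    intro t ht
    by_cases hx : x t < 2 / 3
    · exact Or.inl ⟨hx, hout t ht hx⟩
    · have hx : 2 / 3 ≤ x t := not_lt.1 hx
      exact Or.inr ⟨lt_of_not_ge fun hy => (hQ t ht).not_ge (separatrix_nonneg hx hy), hx⟩
  clear hout
  wlog hlt₀ : x 0 < y 0 generalizing x y
  · refine this h.swap (fun t ht => separatrix_comm (x t) (y t) ▸ hQ t ht)
      (fun t ht => (hsplit t ht).symm) ?_
    rcases hsplit 0 le_rfl with h' | h' <;> linarith
  have hlt : ∀ t : ℝ, 0 ≤ t → x t - y t < 0 :=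
    fun t ht => isPreconnected_Ici.gt_of_ne (f := fun s => x s - y s)
      (h.continuousOn_fst.sub h.swap.continuousOn_fst)
      (fun s hs => by rcases hsplit s hs with h' | h' <;> (intro; linarith))
      ⟨0, self_mem_Ici, sub_neg.2 hlt₀⟩ ht
  have hsep : ∀ t : ℝ, 0 ≤ t → x t < 2 / 3 ∧ 2 / 3 ≤ y t := fun t ht =>
    (hsplit t ht).resolve_right fun h' => by linarith [hlt t ht]
  obtain ⟨hx, hy⟩ := h.tendsto_twoThirds_of_forall_lt_le hsep
  rcases mul_eq_zero.1 (h.sub_mul_separatrix_eq_zero_of_tendsto hx hy) with h' | h'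
  · linarith
  · exact (hQ 0 le_rfl).ne h'

end IsSolution

end StagHunt

/-- **Stag Hunt, region of attraction of (Hare,Hare).**
For the projected replicator dynamics of the Stag Hunt game,
`ẋ = x(1-x)(3y-2)`, `ẏ = y(1-y)(3x-2)` on `(0,1)²`, every solution whose initial
condition lies strictly below the curve
`y = (1/2)(1 - x + √(1 + 2x - 3x²))` converges to `(0,0)` (i.e. to (Hare,Hare)). -/
theorem stagHunt_below_curve_tendsto_hare
    (x y : ℝ → ℝ)
    (hmem : ∀ t : ℝ, 0 ≤ t → x t ∈ Ioo (0:ℝ) 1 ∧ y t ∈ Ioo (0:ℝ) 1)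
    (hx : ∀ t : ℝ, 0 ≤ t →
      HasDerivAt x (x t * (1 - x t) * (3 * y t - 2)) t)
    (hy : ∀ t : ℝ, 0 ≤ t →
      HasDerivAt y (y t * (1 - y t) * (3 * x t - 2)) t)
    (h0 : y 0 < (1/2) * (1 - x 0 + Real.sqrt (1 + 2 * x 0 - 3 * (x 0)^2))) :
    Tendsto (fun t => (x t, y t)) atTop (𝓝 ((0:ℝ), (0:ℝ))) := by
  have h : StagHunt.IsSolution x y := ⟨hmem, hx, hy⟩
  have hQ₀ := StagHunt.separatrix_neg_of_lt (hmem 0 le_rfl).1 (hmem 0 le_rfl).2.1 h0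
  obtain ⟨T, hT, hxT, hyT⟩ := h.exists_lt_twoThirds fun t ht => h.separatrix_neg hQ₀ ht
  exact h.tendsto_zero_of_lt_twoThirds hT hxT hyT
end

section
/- The Lebesgue measure of the set {(x,y) ∈ (0,1)² : y < (1/2)(1 − x + √(1 + 2x − 3x²))} equals (9 + 2√3·π)/27, and consequently the Lebesgue measure of {(x,y) ∈ (0,1)² : y > (1/2)(1 − x + √(1 + 2x − 3x²))} equals (18 − 2√3·π)/27. -/
/-!
The boundary `y = (1 - x + √(1 + 2x - 3x²)) / 2` is an arc of an ellipse with values in `[0, 1]`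
over `(0, 1)`, so both regions lie between two graphs and their measures are integrals. The
substitution `u = (3x - 1) / 2` turns `√(1 + 2x - 3x²)` into `(2 / √3) √(1 - u²)`, and
`∫_{-1/2}^{1} √(1 - u²) du = π/3 + √3/8` is the area of a segment of the unit disc.
-/

open MeasureTheory Set Real

theorem hasDerivAt_mul_sqrt_one_sub_sq_add_arcsin {u : ℝ} (h₁ : -1 < u) (h₂ : u < 1) :
    HasDerivAt (fun u => u * √(1 - u ^ 2) + arcsin u) (2 * √(1 - u ^ 2)) u := by
  have hpos : 0 < 1 - u ^ 2 := by nlinarith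
  have hsqrt : HasDerivAt (fun u => √(1 - u ^ 2)) (-(2 * u) / (2 * √(1 - u ^ 2))) u := by
    refine HasDerivAt.sqrt ?_ hpos.ne'
    simpa using (hasDerivAt_pow 2 u).const_sub 1
  refine (((hasDerivAt_id' u).mul hsqrt).add (hasDerivAt_arcsin h₁.ne' h₂.ne)).congr_deriv ?_
  have hs : 0 < √(1 - u ^ 2) := sqrt_pos.mpr hpos
  field_simp
  rw [sq_sqrt hpos.le]
  ring

theorem integral_sqrt_one_sub_sq_of_le {a b : ℝ} (ha : -1 ≤ a) (hab : a ≤ b) (hb : b ≤ 1) :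
    ∫ u in a..b, √(1 - u ^ 2) =
      (b * √(1 - b ^ 2) + arcsin b - (a * √(1 - a ^ 2) + arcsin a)) / 2 := by
  have hderiv : ∀ u ∈ Ioo a b,
      HasDerivAt (fun u => (u * √(1 - u ^ 2) + arcsin u) / 2) (√(1 - u ^ 2)) u := fun u hu => by
    simpa using (hasDerivAt_mul_sqrt_one_sub_sq_add_arcsin (ha.trans_lt hu.1)
      (hu.2.trans_le hb)).div_const 2
  rw [intervalIntegral.integral_eq_sub_of_hasDerivAt_of_le hab (by fun_prop) hderiv
    ((by fun_prop : Continuous fun u : ℝ => √(1 - u ^ 2)).intervalIntegrable _ _)]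
  ring

theorem arcsin_one_half : arcsin (1 / 2) = π / 6 := by
  rw [← sin_pi_div_six, arcsin_sin] <;> linarith [pi_pos]

theorem sqrt_one_add_two_mul_sub_three_mul_sq (x : ℝ) :
    √(1 + 2 * x - 3 * x ^ 2) = 2 / √3 * √(1 - (3 / 2 * x - 1 / 2) ^ 2) := by
  have h3 : √3 ≠ 0 := by positivity
  have h4 : (2 : ℝ) = √4 := by rw [show (4 : ℝ) = 2 ^ 2 by norm_num, sqrt_sq zero_le_two]
  rw [div_mul_eq_mul_div, eq_div_iff h3, mul_comm, ← sqrt_mul zero_le_three, h4,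
    ← sqrt_mul zero_le_four]
  ring_nf

theorem integral_sqrt_one_add_two_mul_sub_three_mul_sq :
    ∫ x in (0 : ℝ)..1, √(1 + 2 * x - 3 * x ^ 2) = 1 / 6 + 4 * √3 * π / 27 := by
  have hsegment : ∫ u in (-1 / 2 : ℝ)..1, √(1 - u ^ 2) = π / 3 + √3 / 8 := by
    have hsqrt : √(1 - (-(1 / 2)) ^ 2 : ℝ) = √3 / 2 := by
      rw [show (1 - (-(1 / 2)) ^ 2 : ℝ) = 3 / 2 ^ 2 by norm_num, sqrt_div' _ (by norm_num),
        sqrt_sq zero_le_two]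
    rw [integral_sqrt_one_sub_sq_of_le (by norm_num) (by norm_num) le_rfl,
      show (-1 / 2 : ℝ) = -(1 / 2) by ring, arcsin_neg, arcsin_one_half, arcsin_one, hsqrt]
    norm_num
    ring
  have h3 : √3 ^ 2 = 3 := sq_sqrt zero_le_three
  simp_rw [sqrt_one_add_two_mul_sub_three_mul_sq]
  rw [intervalIntegral.integral_const_mul,
    intervalIntegral.integral_comp_mul_sub (fun u => √(1 - u ^ 2)) (by norm_num),
    show (3 / 2 * 0 - 1 / 2 : ℝ) = -1 / 2 by norm_num,
    show (3 / 2 * 1 - 1 / 2 : ℝ) = 1 by norm_num, hsegment, smul_eq_mul]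
  field_simp
  linear_combination (-1728 * π) * h3

theorem volume_strip_below_graph {f : ℝ → ℝ} {s : Set ℝ} (hs : MeasurableSet s)
    (hf : IntegrableOn f s) (hf₀ : ∀ x ∈ s, 0 ≤ f x) (hf₁ : ∀ x ∈ s, f x ≤ 1) :
    volume {p : ℝ × ℝ | p.1 ∈ s ∧ p.2 ∈ Ioo 0 1 ∧ p.2 < f p.1} =
      ENNReal.ofReal (∫ x in s, f x) := by
  have hregion : {p : ℝ × ℝ | p.1 ∈ s ∧ p.2 ∈ Ioo 0 1 ∧ p.2 < f p.1} =
      regionBetween (fun _ => 0) f s := by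
    ext ⟨x, y⟩
    simp only [regionBetween, mem_ofPred_eq, mem_Ioo]
    exact ⟨fun ⟨hx, ⟨hy, _⟩, hyf⟩ => ⟨hx, hy, hyf⟩,
      fun ⟨hx, hy, hyf⟩ => ⟨hx, ⟨hy, hyf.trans_le (hf₁ x hx)⟩, hyf⟩⟩
  rw [hregion, Measure.volume_eq_prod,
    volume_regionBetween_eq_integral integrableOn_zero hf hs hf₀]
  simp

theorem volume_strip_above_graph {f : ℝ → ℝ} {s : Set ℝ} (hs : MeasurableSet s)
    (hs_fin : volume s ≠ ⊤) (hf : IntegrableOn f s) (hf₀ : ∀ x ∈ s, 0 ≤ f x)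
    (hf₁ : ∀ x ∈ s, f x ≤ 1) :
    volume {p : ℝ × ℝ | p.1 ∈ s ∧ p.2 ∈ Ioo 0 1 ∧ f p.1 < p.2} =
      ENNReal.ofReal (volume.real s - ∫ x in s, f x) := by
  have hregion : {p : ℝ × ℝ | p.1 ∈ s ∧ p.2 ∈ Ioo 0 1 ∧ f p.1 < p.2} =
      regionBetween f (fun _ => 1) s := by
    ext ⟨x, y⟩
    simp only [regionBetween, mem_ofPred_eq, mem_Ioo]
    exact ⟨fun ⟨hx, ⟨_, hy⟩, hfy⟩ => ⟨hx, hfy, hy⟩,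
      fun ⟨hx, hfy, hy⟩ => ⟨hx, ⟨(hf₀ x hx).trans_lt hfy, hy⟩, hfy⟩⟩
  have hone : IntegrableOn (fun _ => (1 : ℝ)) s := integrableOn_const hs_fin
  rw [hregion, Measure.volume_eq_prod, volume_regionBetween_eq_integral hf hone hs hf₁]
  simp only [Pi.sub_apply]
  rw [integral_sub hone hf, setIntegral_const, smul_eq_mul, mul_one]

noncomputable def stagHuntBoundary (x : ℝ) : ℝ := (1 / 2) * (1 - x + √(1 + 2 * x - 3 * x ^ 2))

theorem continuous_stagHuntBoundary : Continuous stagHuntBoundary := by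
  unfold stagHuntBoundary
  fun_prop

theorem stagHuntBoundary_nonneg {x : ℝ} (hx : x ≤ 1) : 0 ≤ stagHuntBoundary x := by
  unfold stagHuntBoundary
  linarith [sqrt_nonneg (1 + 2 * x - 3 * x ^ 2)]

theorem stagHuntBoundary_le_one {x : ℝ} (hx : -1 ≤ x) : stagHuntBoundary x ≤ 1 := by
  have hsqrt : √(1 + 2 * x - 3 * x ^ 2) ≤ 1 + x :=
    (sqrt_le_left (by linarith)).mpr (by nlinarith [sq_nonneg x])
  unfold stagHuntBoundary
  linarith

theorem integral_stagHuntBoundary :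
    ∫ x in Ioo (0 : ℝ) 1, stagHuntBoundary x = (9 + 2 * √3 * π) / 27 := by
  have hlinear : ∫ x in (0 : ℝ)..1, (1 - x) = 1 / 2 := by
    rw [intervalIntegral.integral_sub intervalIntegrable_const
      intervalIntegral.intervalIntegrable_id, integral_id, intervalIntegral.integral_const]
    norm_num
  rw [← integral_Ioc_eq_integral_Ioo, ← intervalIntegral.integral_of_le zero_le_one]
  unfold stagHuntBoundary
  rw [intervalIntegral.integral_const_mul,
    intervalIntegral.integral_add
      ((by fun_prop : Continuous fun x : ℝ => 1 - x).intervalIntegrable _ _)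
      ((by fun_prop : Continuous fun x : ℝ => √(1 + 2 * x - 3 * x ^ 2)).intervalIntegrable _ _),
    hlinear, integral_sqrt_one_add_two_mul_sub_three_mul_sq]
  ring

/-- **Sizes of the regions of attraction in the Stag Hunt game.**
The Lebesgue measure of the region of `(0,1)²` strictly below the curve
`y = (1/2)(1 - x + √(1 + 2x - 3x²))` (the region of attraction of the
risk-dominant equilibrium (Hare,Hare)) equals `(9 + 2√3·π)/27`, and the measure
of the region strictly above the curve (the region of attraction of
(Stag,Stag)) equals `(18 - 2√3·π)/27`. -/
theorem stagHunt_basin_measures :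
    volume {p : ℝ × ℝ | p.1 ∈ Ioo (0:ℝ) 1 ∧ p.2 ∈ Ioo (0:ℝ) 1 ∧
        p.2 < (1/2) * (1 - p.1 + Real.sqrt (1 + 2 * p.1 - 3 * p.1 ^ 2))} =
      ENNReal.ofReal ((9 + 2 * Real.sqrt 3 * Real.pi) / 27) ∧
    volume {p : ℝ × ℝ | p.1 ∈ Ioo (0:ℝ) 1 ∧ p.2 ∈ Ioo (0:ℝ) 1 ∧
        p.2 > (1/2) * (1 - p.1 + Real.sqrt (1 + 2 * p.1 - 3 * p.1 ^ 2))} =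
      ENNReal.ofReal ((18 - 2 * Real.sqrt 3 * Real.pi) / 27) := by
  have hint : IntegrableOn stagHuntBoundary (Ioo 0 1) :=
    continuous_stagHuntBoundary.integrableOn_Icc.mono_set Ioo_subset_Icc_self
  have hnonneg : ∀ x ∈ Ioo (0 : ℝ) 1, 0 ≤ stagHuntBoundary x :=
    fun x hx => stagHuntBoundary_nonneg hx.2.le
  have hle : ∀ x ∈ Ioo (0 : ℝ) 1, stagHuntBoundary x ≤ 1 :=
    fun x hx => stagHuntBoundary_le_one (by linarith [hx.1])
  constructor
  · rw [← integral_stagHuntBoundary]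
    exact volume_strip_below_graph measurableSet_Ioo hint hnonneg hle
  · refine (volume_strip_above_graph measurableSet_Ioo measure_Ioo_lt_top.ne hint hnonneg
      hle).trans ?_
    rw [integral_stagHuntBoundary, volume_real_Ioo_of_le zero_le_one]
    ring_nf
end

section
/- Consider the planar ODE ẋ = x(1−x)(3y−2), ẏ = y(1−y)(3x−2) on (0,1)². For every solution (x(t), y(t)) : [0,∞) → (0,1)² whose initial condition satisfies y(0) = (1/2)(1 − x(0) + √(1 + 2x(0) − 3x(0)²)), we have (x(t), y(t)) → (2/3, 2/3) as t → ∞; that is, the curve {(x, (1/2)(1 − x + √(1 + 2x − 3x²))) : x ∈ (0,1)} is contained in the stable manifold of the fully mixed equilibrium (2/3, 2/3). -/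
/-!
The curve is the arc inside `(0,1)²` of the conic `x² + xy + y² = x + y`, which passes through
`(2/3, 2/3)`. Along solutions `Q = conic x y` satisfies `Q' = -2(3xy - 2x - 2y + 1) Q`, so by
Grönwall the arc is invariant. On the arc, `x - 2/3` and `y - 2/3` have opposite signs and
vanish together. If the solution ever reaches `(2/3, 2/3)` it stays there (Grönwall again, for the
squared distance to the equilibrium). Otherwise neither coordinate crosses `2/3`, so up to swapping
`x` and `y` the coordinate `x` increases below `2/3` and `y` decreases above it. Both converge, and
a limit at which the vector field did not vanish would force a drift at nonzero asymptotic speed;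
the only zero of the vector field in the open square is `(2/3, 2/3)`.
-/

open Filter Topology Set

theorem MonotoneOn.exists_tendsto_atTop_s10 {ι α : Type*} [Preorder ι] [IsDirectedOrder ι]
    [ConditionallyCompleteLinearOrder α] [TopologicalSpace α] [OrderTopology α]
    {f : ι → α} {a : ι} (hf : MonotoneOn f (Ici a)) (hb : BddAbove (f '' Ici a)) :
    ∃ L, Tendsto f atTop (𝓝 L) := by
  have hmono : Monotone fun t : Ici a => f t := fun s t hst => hf s.2 t.2 hst
  have hbdd : BddAbove (range fun t : Ici a => f t) := by rwa [← image_eq_range]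
  refine ⟨⨆ t : Ici a, f t, ?_⟩
  rw [← map_val_Ici_atTop a, tendsto_map'_iff]
  exact tendsto_atTop_ciSup hmono hbdd

theorem AntitoneOn.exists_tendsto_atTop_s10 {ι α : Type*} [Preorder ι] [IsDirectedOrder ι]
    [ConditionallyCompleteLinearOrder α] [TopologicalSpace α] [OrderTopology α]
    {f : ι → α} {a : ι} (hf : AntitoneOn f (Ici a)) (hb : BddBelow (f '' Ici a)) :
    ∃ L, Tendsto f atTop (𝓝 L) :=
  MonotoneOn.exists_tendsto_atTop_s10 (α := αᵒᵈ) hf.dual_right hb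

theorem eq_zero_of_tendsto_of_tendsto_deriv {f f' : ℝ → ℝ} {a L c : ℝ}
    (hf : ∀ t, a ≤ t → HasDerivAt f (f' t) t) (hfL : Tendsto f atTop (𝓝 L))
    (hf'c : Tendsto f' atTop (𝓝 c)) : c = 0 := by
  have hmvt : ∀ t, ∃ ξ, a ≤ t → t < ξ ∧ f' ξ = f (t + 1) - f t := by
    intro t
    by_cases ht : a ≤ t
    · obtain ⟨ξ, hξ, hslope⟩ := exists_hasDerivAt_eq_slope f f' (lt_add_one t)
        (fun s hs => (hf s (ht.trans hs.1)).continuousAt.continuousWithinAt)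
        (fun s hs => hf s (ht.trans hs.1.le))
      exact ⟨ξ, fun _ => ⟨hξ.1, by simpa using hslope⟩⟩
    · exact ⟨0, fun h => absurd h ht⟩
  choose ξ hξ using hmvt
  have hξ_top : Tendsto ξ atTop atTop :=
    tendsto_atTop_mono' _ ((eventually_ge_atTop a).mono fun t ht => (hξ t ht).1.le) tendsto_id
  have hdiff : Tendsto (fun t => f (t + 1) - f t) atTop (𝓝 (L - L)) :=
    (hfL.comp (tendsto_atTop_add_const_right _ 1 tendsto_id)).sub hfL
  rw [sub_self] at hdiff
  refine tendsto_nhds_unique ((hf'c.comp hξ_top).congr' ?_) hdiff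
  filter_upwards [eventually_ge_atTop a] with t ht using (hξ t ht).2

theorem eq_zero_of_norm_deriv_le_mul_norm_self_on_Ici {E : Type*} [NormedAddCommGroup E]
    [NormedSpace ℝ E] {f f' : ℝ → E} {K a : ℝ} (hf : ∀ t, a ≤ t → HasDerivAt f (f' t) t)
    (bound : ∀ t, a ≤ t → ‖f' t‖ ≤ K * ‖f t‖) (ha : f a = 0) : ∀ t, a ≤ t → f t = 0 :=
  fun b hb => eq_zero_of_abs_deriv_le_mul_abs_self_of_eq_zero_right
    (fun t ht => (hf t ht.1).continuousAt.continuousWithinAt)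
    (fun t ht => (hf t ht.1).hasDerivWithinAt) ha (fun t ht => bound t ht.1) b ⟨hb, le_rfl⟩

theorem lt_of_continuousOn_of_forall_ne {f : ℝ → ℝ} {a c : ℝ} (hf : ContinuousOn f (Ici a))
    (hne : ∀ t, a ≤ t → f t ≠ c) (ha : f a < c) : ∀ t, a ≤ t → f t < c := by
  intro t ht
  by_contra! hct
  obtain ⟨s, hs, hfs⟩ := isPreconnected_Ici.intermediate_value self_mem_Ici ht hf ⟨ha.le, hct⟩
  exact hne s hs hfs

namespace StagHunt

def conic (a b : ℝ) : ℝ := a ^ 2 + a * b + b ^ 2 - a - b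

theorem conic_comm (a b : ℝ) : conic a b = conic b a := by
  unfold conic
  ring

theorem conic_eq_zero_of_eq_sqrt {a b : ℝ} (ha₀ : 0 ≤ a) (ha₁ : a ≤ 1)
    (hb : b = (1/2) * (1 - a + Real.sqrt (1 + 2 * a - 3 * a ^ 2))) : conic a b = 0 := by
  have hs := Real.sq_sqrt (by nlinarith : (0:ℝ) ≤ 1 + 2 * a - 3 * a ^ 2)
  rw [conic, hb]
  linear_combination (1/4) * hs

theorem eq_two_thirds_of_conic_eq_zero {a b : ℝ} (h : conic a b = 0) (ha : a = 2/3)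
    (hb : 0 < b) : b = 2/3 := by
  have : (b - 2/3) * (b + 1/3) = 0 := by
    rw [← h, conic, ha]
    ring
  rcases mul_eq_zero.mp this with h' | h' <;> linarith

theorem sub_mul_sub_nonpos_of_conic_eq_zero {a b : ℝ} (h : conic a b = 0) (ha : 0 < a)
    (hb : 0 < b) : (a - 2/3) * (b - 2/3) ≤ 0 := by
  unfold conic at h
  by_contra! hpos
  rcases lt_or_gt_of_ne (show a ≠ 2/3 by rintro rfl; simp at hpos) with ha' | ha'
  · have hb' : b < 2/3 := by nlinarith
    nlinarith [mul_pos ha hb]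
  · have hb' : 2/3 < b := by nlinarith
    nlinarith [sq_nonneg (a - b)]

structure IsSolution_s10 (x y : ℝ → ℝ) : Prop where
  mem : ∀ t, 0 ≤ t → x t ∈ Ioo (0:ℝ) 1 ∧ y t ∈ Ioo (0:ℝ) 1
  hasDerivAt_fst : ∀ t, 0 ≤ t → HasDerivAt x (x t * (1 - x t) * (3 * y t - 2)) t
  hasDerivAt_snd : ∀ t, 0 ≤ t → HasDerivAt y (y t * (1 - y t) * (3 * x t - 2)) t

namespace IsSolution_s10

variable {x y : ℝ → ℝ}

theorem swap_s10 (h : IsSolution_s10 x y) : IsSolution_s10 y x :=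
  ⟨fun t ht => (h.mem t ht).symm, h.hasDerivAt_snd, h.hasDerivAt_fst⟩

theorem conic_eq_zero (h : IsSolution_s10 x y) (h₀ : conic (x 0) (y 0) = 0) :
    ∀ t, 0 ≤ t → conic (x t) (y t) = 0 := by
  refine eq_zero_of_norm_deriv_le_mul_norm_self_on_Ici (K := 2)
    (f' := fun t => -2 * (3 * x t * y t - 2 * x t - 2 * y t + 1) * conic (x t) (y t))
    (fun t ht => ?_) (fun t ht => ?_) h₀
  · have hx := h.hasDerivAt_fst t ht
    have hy := h.hasDerivAt_snd t ht
    refine ((((hx.fun_pow 2).add (hx.fun_mul hy)).add (hy.fun_pow 2)).sub hx |>.sub hy)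
      |>.congr_deriv ?_
    simp only [conic]
    push_cast
    ring
  · obtain ⟨⟨hx₀, hx₁⟩, hy₀, hy₁⟩ := h.mem t ht
    rw [Real.norm_eq_abs, Real.norm_eq_abs, abs_mul, abs_mul, abs_neg, abs_two, mul_assoc]
    refine mul_le_mul_of_nonneg_left (mul_le_of_le_one_left (abs_nonneg _) ?_) zero_le_two
    exact abs_le.mpr ⟨by nlinarith [mul_pos (sub_pos.2 hx₁) (sub_pos.2 hy₁)], by nlinarith⟩

theorem tendsto_of_eq (h : IsSolution_s10 x y) {T : ℝ} (hT : 0 ≤ T) (hxT : x T = 2/3)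
    (hyT : y T = 2/3) : Tendsto (fun t => (x t, y t)) atTop (𝓝 ((2/3 : ℝ), (2/3 : ℝ))) := by
  have hV : ∀ t, T ≤ t → (x t - 2/3) ^ 2 + (y t - 2/3) ^ 2 = 0 := by
    refine eq_zero_of_norm_deriv_le_mul_norm_self_on_Ici (K := 2)
      (f' := fun t => 6 * (x t - 2/3) * (y t - 2/3) * (x t * (1 - x t) + y t * (1 - y t)))
      (fun t ht => ?_) (fun t ht => ?_) (by simp [hxT, hyT])
    · refine ((((h.hasDerivAt_fst t (hT.trans ht)).sub_const (2/3)).fun_pow 2).add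
        (((h.hasDerivAt_snd t (hT.trans ht)).sub_const (2/3)).fun_pow 2)).congr_deriv ?_
      push_cast
      ring
    · obtain ⟨⟨hx₀, hx₁⟩, hy₀, hy₁⟩ := h.mem t (hT.trans ht)
      set u := x t - 2/3
      set v := y t - 2/3
      have hp : x t * (1 - x t) + y t * (1 - y t) ≤ 1/2 := by
        nlinarith [sq_nonneg (x t - 1/2), sq_nonneg (y t - 1/2)]
      have hp₀ : 0 ≤ x t * (1 - x t) + y t * (1 - y t) := by nlinarith
      rw [Real.norm_eq_abs, Real.norm_eq_abs, abs_of_nonneg (by positivity : 0 ≤ u ^ 2 + v ^ 2),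
        abs_le]
      constructor <;> nlinarith [mul_nonneg (sq_nonneg (u + v)) hp₀,
        mul_nonneg (sq_nonneg (u - v)) hp₀, mul_nonneg (sq_nonneg (u + v)) (sub_nonneg.2 hp),
        mul_nonneg (sq_nonneg (u - v)) (sub_nonneg.2 hp)]
  refine tendsto_const_nhds.congr' ?_
  filter_upwards [eventually_ge_atTop T] with t ht
  have := hV t ht
  rw [Prod.ext_iff]
  constructor <;> nlinarith [sq_nonneg (x t - 2/3), sq_nonneg (y t - 2/3)]

theorem eq_two_thirds_of_tendsto (h : IsSolution_s10 x y) {L M : ℝ} (hL : Tendsto x atTop (𝓝 L))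
    (hM : Tendsto y atTop (𝓝 M)) (hL₀ : 0 < L) (hL₁ : L < 1) (hM₀ : 0 < M) (hM₁ : M < 1) :
    L = 2/3 ∧ M = 2/3 := by
  have hdx := eq_zero_of_tendsto_of_tendsto_deriv h.hasDerivAt_fst hL
    ((hL.mul (tendsto_const_nhds.sub hL)).mul ((tendsto_const_nhds.mul hM).sub tendsto_const_nhds))
  have hdy := eq_zero_of_tendsto_of_tendsto_deriv h.hasDerivAt_snd hM
    ((hM.mul (tendsto_const_nhds.sub hM)).mul ((tendsto_const_nhds.mul hL).sub tendsto_const_nhds))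
  constructor
  · rcases mul_eq_zero.mp hdy with hdy | hdy
    · nlinarith
    · linarith
  · rcases mul_eq_zero.mp hdx with hdx | hdx
    · nlinarith
    · linarith

theorem tendsto_of_le_of_ge (h : IsSolution_s10 x y) (hx : ∀ t, 0 ≤ t → x t ≤ 2/3)
    (hy : ∀ t, 0 ≤ t → 2/3 ≤ y t) :
    Tendsto (fun t => (x t, y t)) atTop (𝓝 ((2/3 : ℝ), (2/3 : ℝ))) := by
  have hx_mono : MonotoneOn x (Ici 0) := by
    refine monotoneOn_of_hasDerivWithinAt_nonneg (convex_Ici 0)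
      (fun t ht => (h.hasDerivAt_fst t ht).continuousAt.continuousWithinAt)
      (fun t ht => (h.hasDerivAt_fst t (interior_subset ht)).hasDerivWithinAt) fun t ht => ?_
    obtain ⟨⟨hx₀, hx₁⟩, -⟩ := h.mem t (interior_subset ht)
    have := hy t (interior_subset ht)
    exact mul_nonneg (mul_nonneg hx₀.le (by linarith)) (by linarith)
  have hy_anti : AntitoneOn y (Ici 0) := by
    refine antitoneOn_of_hasDerivWithinAt_nonpos (convex_Ici 0)
      (fun t ht => (h.hasDerivAt_snd t ht).continuousAt.continuousWithinAt)
      (fun t ht => (h.hasDerivAt_snd t (interior_subset ht)).hasDerivWithinAt) fun t ht => ?_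
    obtain ⟨-, hy₀, hy₁⟩ := h.mem t (interior_subset ht)
    have := hx t (interior_subset ht)
    exact mul_nonpos_of_nonneg_of_nonpos (mul_nonneg hy₀.le (by linarith)) (by linarith)
  obtain ⟨L, hL⟩ := hx_mono.exists_tendsto_atTop_s10 ⟨2/3, by rintro _ ⟨t, ht, rfl⟩; exact hx t ht⟩
  obtain ⟨M, hM⟩ := hy_anti.exists_tendsto_atTop_s10 ⟨2/3, by rintro _ ⟨t, ht, rfl⟩; exact hy t ht⟩
  have hx₀L : x 0 ≤ L := ge_of_tendsto hL <|
    (eventually_ge_atTop 0).mono fun t ht => hx_mono self_mem_Ici ht ht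
  have hL₂ : L ≤ 2/3 := le_of_tendsto hL <| (eventually_ge_atTop 0).mono hx
  have hMy₀ : M ≤ y 0 := le_of_tendsto hM <|
    (eventually_ge_atTop 0).mono fun t ht => hy_anti self_mem_Ici ht ht
  have hM₂ : 2/3 ≤ M := ge_of_tendsto hM <| (eventually_ge_atTop 0).mono hy
  obtain ⟨rfl, rfl⟩ := h.eq_two_thirds_of_tendsto hL hM (by linarith [(h.mem 0 le_rfl).1.1])
    (by linarith) (by linarith) (by linarith [(h.mem 0 le_rfl).2.2])
  exact hL.prodMk_nhds hM

theorem tendsto_of_forall_ne_of_lt (h : IsSolution_s10 x y)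
    (hQ : ∀ t, 0 ≤ t → conic (x t) (y t) = 0) (hxne : ∀ t, 0 ≤ t → x t ≠ 2/3)
    (hx₀ : x 0 < 2/3) : Tendsto (fun t => (x t, y t)) atTop (𝓝 ((2/3 : ℝ), (2/3 : ℝ))) := by
  have hx : ∀ t, 0 ≤ t → x t < 2/3 := lt_of_continuousOn_of_forall_ne
    (fun t ht => (h.hasDerivAt_fst t ht).continuousAt.continuousWithinAt) hxne hx₀
  refine h.tendsto_of_le_of_ge (fun t ht => (hx t ht).le) fun t ht => ?_
  nlinarith [hx t ht,
    sub_mul_sub_nonpos_of_conic_eq_zero (hQ t ht) (h.mem t ht).1.1 (h.mem t ht).2.1]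

theorem tendsto_of_forall_ne (h : IsSolution_s10 x y)
    (hQ : ∀ t, 0 ≤ t → conic (x t) (y t) = 0) (hxne : ∀ t, 0 ≤ t → x t ≠ 2/3)
    (hyne : ∀ t, 0 ≤ t → y t ≠ 2/3) :
    Tendsto (fun t => (x t, y t)) atTop (𝓝 ((2/3 : ℝ), (2/3 : ℝ))) := by
  rcases (hxne 0 le_rfl).lt_or_gt with hx₀ | hx₀
  · exact h.tendsto_of_forall_ne_of_lt hQ hxne hx₀
  have hy₀ : y 0 < 2/3 := (hyne 0 le_rfl).lt_of_le <| by
    nlinarith [sub_mul_sub_nonpos_of_conic_eq_zero (hQ 0 le_rfl) (h.mem 0 le_rfl).1.1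
      (h.mem 0 le_rfl).2.1]
  have hQ' : ∀ t, 0 ≤ t → conic (y t) (x t) = 0 := fun t ht =>
    (conic_comm _ _).trans (hQ t ht)
  exact (continuous_swap.tendsto _).comp (h.swap_s10.tendsto_of_forall_ne_of_lt hQ' hyne hy₀)

end IsSolution_s10

end StagHunt

/-- **Stag Hunt, stable manifold of the mixed equilibrium.**
For the projected replicator dynamics of the Stag Hunt game,
`ẋ = x(1-x)(3y-2)`, `ẏ = y(1-y)(3x-2)` on `(0,1)²`, every solution whose initial
condition lies on the curve `y = (1/2)(1 - x + √(1 + 2x - 3x²))` converges to the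
fully mixed equilibrium `(2/3, 2/3)`; i.e. this curve is contained in the stable
manifold of `(2/3, 2/3)`. -/
theorem stagHunt_on_curve_tendsto_mixed
    (x y : ℝ → ℝ)
    (hmem : ∀ t : ℝ, 0 ≤ t → x t ∈ Ioo (0:ℝ) 1 ∧ y t ∈ Ioo (0:ℝ) 1)
    (hx : ∀ t : ℝ, 0 ≤ t →
      HasDerivAt x (x t * (1 - x t) * (3 * y t - 2)) t)
    (hy : ∀ t : ℝ, 0 ≤ t →
      HasDerivAt y (y t * (1 - y t) * (3 * x t - 2)) t)
    (h0 : y 0 = (1/2) * (1 - x 0 + Real.sqrt (1 + 2 * x 0 - 3 * (x 0)^2))) :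
    Tendsto (fun t => (x t, y t)) atTop (𝓝 ((2/3 : ℝ), (2/3 : ℝ))) := by
  have h : StagHunt.IsSolution_s10 x y := ⟨hmem, hx, hy⟩
  have hQ := h.conic_eq_zero
    (StagHunt.conic_eq_zero_of_eq_sqrt (hmem 0 le_rfl).1.1.le (hmem 0 le_rfl).1.2.le h0)
  by_cases hhit : ∃ T, 0 ≤ T ∧ x T = 2/3 ∧ y T = 2/3
  · obtain ⟨T, hT, hxT, hyT⟩ := hhit
    exact h.tendsto_of_eq hT hxT hyT
  refine h.tendsto_of_forall_ne hQ (fun t ht hxt => hhit ⟨t, ht, hxt, ?_⟩)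
    (fun t ht hyt => hhit ⟨t, ht, ?_, hyt⟩)
  · exact StagHunt.eq_two_thirds_of_conic_eq_zero (hQ t ht) hxt (hmem t ht).2.1
  · exact StagHunt.eq_two_thirds_of_conic_eq_zero ((StagHunt.conic_comm _ _).trans (hQ t ht))
      hyt (hmem t ht).1.1
end

section
/- Let w ≥ 1 and consider the planar ODE ẋ = x(1−x)((w+1)y − w), ẏ = y(1−y)((w+1)x − w) on (0,1)². Along every solution (x(t), y(t)) : ℝ → (0,1)², the quantity w·ln x(t) + ln(1 − x(t)) − w·ln y(t) − ln(1 − y(t)) is constant in t; equivalently, the ratio x(t)^w (1 − x(t)) / (y(t)^w (1 − y(t))) is invariant along trajectories. -/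
open Filter Topology Set Real

/-! Put `P(u) = w log u + log (1 - u)`, so that `P'(u) u (1 - u) = w - (w + 1) u`. Along a solution,
`d/dt P(x) = ((w + 1) y - w) (w - (w + 1) x)`, an expression symmetric in `x` and `y`; hence
`d/dt P(y)` is the same and `P(x) - P(y)` is constant. Exponentiating gives the ratio form. -/

noncomputable def coordinationPotential (w u : ℝ) : ℝ := w * log u + log (1 - u)

lemma hasDerivAt_coordinationPotential {w u : ℝ} (hu : u ∈ Ioo (0 : ℝ) 1) :
    HasDerivAt (coordinationPotential w) (w / u - 1 / (1 - u)) u := by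
  have h1u : 1 - u ≠ 0 := sub_ne_zero.mpr hu.2.ne'
  have hlog := ((hasDerivAt_id' u).log hu.1.ne').const_mul w
  have hlog1 := ((hasDerivAt_id' u).const_sub 1).log h1u
  exact (hlog.add hlog1).congr_deriv (by ring)

lemma HasDerivAt.coordinationPotential_comp {w c t : ℝ} {x : ℝ → ℝ} (hxt : x t ∈ Ioo (0 : ℝ) 1)
    (hx : HasDerivAt x (x t * (1 - x t) * c) t) :
    HasDerivAt (fun s => coordinationPotential w (x s)) (c * (w - (w + 1) * x t)) t := by
  have h0 : x t ≠ 0 := hxt.1.ne'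
  have h1 : 1 - x t ≠ 0 := sub_ne_zero.mpr hxt.2.ne'
  refine ((hasDerivAt_coordinationPotential hxt).comp t hx).congr_deriv ?_
  field_simp
  ring

lemma exp_coordinationPotential {w u : ℝ} (hu : u ∈ Ioo (0 : ℝ) 1) :
    exp (coordinationPotential w u) = u ^ w * (1 - u) := by
  rw [coordinationPotential, exp_add, exp_log (sub_pos.mpr hu.2), rpow_def_of_pos hu.1, mul_comm (log u)]

theorem Gw_replicator_invariant_general
    (w : ℝ) (x y : ℝ → ℝ)
    (hmem : ∀ t : ℝ, x t ∈ Ioo (0:ℝ) 1 ∧ y t ∈ Ioo (0:ℝ) 1)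
    (hx : ∀ t : ℝ, HasDerivAt x (x t * (1 - x t) * ((w + 1) * y t - w)) t)
    (hy : ∀ t : ℝ, HasDerivAt y (y t * (1 - y t) * ((w + 1) * x t - w)) t) :
    (∀ s t : ℝ,
      w * Real.log (x s) + Real.log (1 - x s)
        - w * Real.log (y s) - Real.log (1 - y s) =
      w * Real.log (x t) + Real.log (1 - x t)
        - w * Real.log (y t) - Real.log (1 - y t)) ∧
    (∀ s t : ℝ,
      x s ^ w * (1 - x s) / (y s ^ w * (1 - y s)) =
      x t ^ w * (1 - x t) / (y t ^ w * (1 - y t))) := by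
  set H : ℝ → ℝ := fun t => coordinationPotential w (x t) - coordinationPotential w (y t)
  have hderiv (t : ℝ) : HasDerivAt H 0 t :=
    (((hx t).coordinationPotential_comp (hmem t).1).sub
      ((hy t).coordinationPotential_comp (hmem t).2)).congr_deriv (by ring)
  have hconst (s t : ℝ) : H s = H t :=
    is_const_of_deriv_eq_zero (fun t => (hderiv t).differentiableAt) (fun t => (hderiv t).deriv) s t
  refine ⟨fun s t => ?_, fun s t => ?_⟩
  · have h := hconst s t
    simp only [H, coordinationPotential] at h
    linarith
  · rw [← exp_coordinationPotential (hmem s).1, ← exp_coordinationPotential (hmem s).2,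
      ← exp_coordinationPotential (hmem t).1, ← exp_coordinationPotential (hmem t).2,
      ← exp_sub, ← exp_sub]
    exact congrArg exp (hconst s t)

/-- **Invariant of the replicator dynamics of the coordination game `G(w)`.**
For `w ≥ 1` and the planar ODE `ẋ = x(1-x)((w+1)y - w)`, `ẏ = y(1-y)((w+1)x - w)`
on `(0,1)²`, the quantity `w·ln x + ln(1-x) - w·ln y - ln(1-y)` is constant along
every solution; equivalently `x^w (1-x) / (y^w (1-y))` is invariant. -/
theorem Gw_replicator_invariant
    (w : ℝ) (hw : 1 ≤ w) (x y : ℝ → ℝ)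
    (hmem : ∀ t : ℝ, x t ∈ Ioo (0:ℝ) 1 ∧ y t ∈ Ioo (0:ℝ) 1)
    (hx : ∀ t : ℝ, HasDerivAt x (x t * (1 - x t) * ((w + 1) * y t - w)) t)
    (hy : ∀ t : ℝ, HasDerivAt y (y t * (1 - y t) * ((w + 1) * x t - w)) t) :
    (∀ s t : ℝ,
      w * Real.log (x s) + Real.log (1 - x s)
        - w * Real.log (y s) - Real.log (1 - y s) =
      w * Real.log (x t) + Real.log (1 - x t)
        - w * Real.log (y t) - Real.log (1 - y t)) ∧
    (∀ s t : ℝ,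
      x s ^ w * (1 - x s) / (y s ^ w * (1 - y s)) =
      x t ^ w * (1 - x t) / (y t ^ w * (1 - y t))) :=
  Gw_replicator_invariant_general w x y hmem hx hy
end

section
/- In the n-balls-n-bins game, every weakly stable Nash equilibrium is pure, i.e., every player chooses a single bin with probability one (and all bins receive exactly one ball). -/
open Finset


/-- Expected cost of ball `i` choosing bin `γ` in the `n`-balls-`n`-bins game:
the expected load of bin `γ` given that `i` uses it. -/
def bbCost (n : ℕ) (p : Fin n → Fin n → ℝ) (i γ : Fin n) : ℝ :=
  1 + ∑ j ∈ Finset.univ.erase i, p j γ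

/-- Membership in the product of simplices (a mixed profile). -/
def bbSimplex {n : ℕ} (p : Fin n → Fin n → ℝ) : Prop :=
  ∀ i, (∀ γ, 0 ≤ p i γ) ∧ ∑ γ, p i γ = 1

/-- Mixed Nash equilibrium of the `n`-balls-`n`-bins game. -/
def bbNash {n : ℕ} (p : Fin n → Fin n → ℝ) : Prop :=
  bbSimplex p ∧ ∀ i γ γ', 0 < p i γ → bbCost n p i γ ≤ bbCost n p i γ'

/-- Weakly stable Nash equilibrium: for any two players `i ≠ j`, fixing `j` to
any strategy `δ` in its support leaves `i` indifferent among the strategies in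
its own support. -/
def bbWeaklyStable {n : ℕ} (p : Fin n → Fin n → ℝ) : Prop :=
  bbNash p ∧ ∀ i j : Fin n, i ≠ j → ∀ δ, 0 < p j δ →
    ∀ γ γ', 0 < p i γ → 0 < p i γ' →
      bbCost n (Function.update p j fun σ => if σ = δ then 1 else 0) i γ =
      bbCost n (Function.update p j fun σ => if σ = δ then 1 else 0) i γ'


section aux
variable {n : ℕ} {p : Fin n → Fin n → ℝ}

lemma bb_le_one (hp : bbSimplex p) (i γ : Fin n) : p i γ ≤ 1 := by
  have h := Finset.single_le_sum (f := p i) (fun x _ => (hp i).1 x) (Finset.mem_univ γ)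
  simpa [(hp i).2] using h

lemma bb_pair (hp : bbSimplex p) (i : Fin n) {γ γ' : Fin n} (h : γ ≠ γ') :
    p i γ + p i γ' ≤ 1 := by
  have h2 : ∑ x ∈ ({γ, γ'} : Finset (Fin n)), p i x ≤ ∑ x, p i x :=
    Finset.sum_le_sum_of_subset_of_nonneg (Finset.subset_univ _) (fun x _ _ => (hp i).1 x)
  simpa [Finset.sum_pair h, (hp i).2] using h2

lemma bb_exists_pos (hp : bbSimplex p) (i : Fin n) : ∃ β, 0 < p i β := by
  by_contra hc
  push_neg at hc
  have : ∑ γ, p i γ = 0 :=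
    Finset.sum_eq_zero (fun γ _ => le_antisymm (hc γ) ((hp i).1 γ))
  rw [(hp i).2] at this; norm_num at this

lemma bb_update_sum (q : Fin n → Fin n → ℝ) {i j : Fin n} (hij : i ≠ j)
    (g : Fin n → ℝ) (β : Fin n) :
    ∑ k ∈ Finset.univ.erase i, (Function.update q j g) k β
      = (∑ k ∈ Finset.univ.erase i, q k β) - q j β + g β := by
  have hj : j ∈ Finset.univ.erase i := Finset.mem_erase.2 ⟨hij.symm, Finset.mem_univ j⟩
  rw [← Finset.add_sum_erase _ (fun k => (Function.update q j g) k β) hj,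
      ← Finset.add_sum_erase _ (fun k => q k β) hj]
  have hc : ∀ k ∈ (Finset.univ.erase i).erase j,
      (Function.update q j g) k β = q k β := by
    intro k hk
    rw [Function.update_of_ne (Finset.ne_of_mem_erase hk)]
  rw [Finset.sum_congr rfl hc, Function.update_self]
  ring

/-- Key consequence of weak stability: if `i` mixes on `γ ≠ γ'` and `j ≠ i` plays `γ`
with positive probability, then `j` is pure on `γ`. -/
lemma bb_key (hp : bbWeaklyStable p) {i j γ γ' : Fin n} (hij : i ≠ j) (hgg : γ ≠ γ')
    (h1 : 0 < p i γ) (h2 : 0 < p i γ') (h3 : 0 < p j γ) : p j γ = 1 ∧ p j γ' = 0 := by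
  have hs : bbSimplex p := hp.1.1
  have e1 := hp.1.2 i γ γ' h1
  have e2 := hp.1.2 i γ' γ h2
  have eS : ∑ k ∈ Finset.univ.erase i, p k γ = ∑ k ∈ Finset.univ.erase i, p k γ' := by
    simp only [bbCost] at e1 e2; linarith
  have hst := hp.2 i j hij γ h3 γ γ' h1 h2
  simp only [bbCost] at hst
  rw [bb_update_sum p hij _ γ, bb_update_sum p hij _ γ'] at hst
  rw [if_pos rfl, if_neg hgg.symm] at hst
  have hle : p j γ ≤ 1 := bb_le_one hs j γ
  have hge : 0 ≤ p j γ' := (hs j).1 γ'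
  constructor <;> linarith

/-- If `i` mixes, no other player puts any mass on `i`'s support. -/
lemma bb_excl (hp : bbWeaklyStable p) {i γ γ' : Fin n} (hgg : γ ≠ γ')
    (h1 : 0 < p i γ) (h2 : 0 < p i γ') :
    ∀ j, j ≠ i → ∀ β, 0 < p i β → p j β = 0 := by
  have hs : bbSimplex p := hp.1.1
  intro j hj β hβ
  by_contra hc
  have hjβ : 0 < p j β := lt_of_le_of_ne ((hs j).1 β) (Ne.symm hc)
  -- pick another support bin β' ≠ β of i
  obtain ⟨β', hβ', hβ'pos⟩ : ∃ β', β' ≠ β ∧ 0 < p i β' := by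
    by_cases h : β = γ
    · exact ⟨γ', by rw [h]; exact hgg.symm, h2⟩
    · exact ⟨γ, Ne.symm h, h1⟩
  have hkey := bb_key hp (Ne.symm hj) (Ne.symm hβ') hβ hβ'pos hjβ
  -- so p j β = 1, hence the load on β from players other than i is ≥ 1
  have hjmem : j ∈ Finset.univ.erase i := Finset.mem_erase.2 ⟨hj, Finset.mem_univ j⟩
  have hSge : (1:ℝ) ≤ ∑ k ∈ Finset.univ.erase i, p k β := by
    have h' : p j β ≤ ∑ k ∈ Finset.univ.erase i, p k β :=
      Finset.single_le_sum (f := fun k => p k β) (fun x _ => (hs x).1 β) hjmem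
    linarith [hkey.1]
  -- Nash: load on β is ≤ load on every bin
  have hNash : ∀ β'' : Fin n, ∑ k ∈ Finset.univ.erase i, p k β
      ≤ ∑ k ∈ Finset.univ.erase i, p k β'' := by
    intro β''
    have := hp.1.2 i β β'' hβ
    simp only [bbCost] at this; linarith
  -- summing over all bins gives n ≤ n - 1
  have hsum : (n:ℝ) * (∑ k ∈ Finset.univ.erase i, p k β)
      ≤ ∑ β'' : Fin n, ∑ k ∈ Finset.univ.erase i, p k β'' := by
    calc (n:ℝ) * (∑ k ∈ Finset.univ.erase i, p k β)
        = ∑ _β'' : Fin n, (∑ k ∈ Finset.univ.erase i, p k β) := by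
          rw [Finset.sum_const, Finset.card_univ, Fintype.card_fin, nsmul_eq_mul]
      _ ≤ _ := Finset.sum_le_sum (fun β'' _ => hNash β'')
  have htot : ∑ β'' : Fin n, ∑ k ∈ Finset.univ.erase i, p k β''
      = (n:ℝ) - 1 := by
    rw [Finset.sum_comm]
    have : ∀ k ∈ Finset.univ.erase i, ∑ β'' : Fin n, p k β'' = 1 :=
      fun k _ => (hs k).2
    rw [Finset.sum_congr rfl this, Finset.sum_const, Finset.card_erase_of_mem (Finset.mem_univ i),
        Finset.card_univ, Fintype.card_fin, nsmul_eq_mul, mul_one]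
    have hn : 1 ≤ n := Nat.one_le_iff_ne_zero.2 (by rintro rfl; exact i.elim0)
    push_cast [Nat.cast_sub hn]
    ring
  have hn1 : (1:ℝ) ≤ (n:ℝ) := by
    have hn : 1 ≤ n := Nat.one_le_iff_ne_zero.2 (by rintro rfl; exact i.elim0)
    exact_mod_cast hn
  nlinarith [hsum, htot, hSge]

/-- Nobody mixes. -/
lemma bb_no_mixer (hp : bbWeaklyStable p) {i γ γ' : Fin n} (hgg : γ ≠ γ')
    (h1 : 0 < p i γ) (h2 : 0 < p i γ') : False := by
  have hs : bbSimplex p := hp.1.1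
  choose g hg using fun x => bb_exists_pos hs x
  by_cases hinj : Function.Injective g
  · -- g is surjective, so some x ≠ i plays i's other support bin: contradiction
    have hsurj : Function.Surjective g := (Finite.injective_iff_surjective).1 hinj
    set δ : Fin n := if g i = γ then γ' else γ with hδ
    have hδpos : 0 < p i δ := by rw [hδ]; split <;> assumption
    have hδne : δ ≠ g i := by
      rw [hδ]; split
      · rename_i h; rw [h]; exact hgg.symm
      · rename_i h; exact fun hc => h hc.symm
    obtain ⟨x, hx⟩ := hsurj δ
    have hxi : x ≠ i := by rintro rfl; exact hδne hx.symm
    have := bb_excl hp hgg h1 h2 x hxi δ hδpos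
    rw [← hx] at this
    exact absurd this (ne_of_gt (hg x))
  · -- two players share a bin; both are pure and ≠ i; Nash contradiction
    rw [Function.not_injective_iff] at hinj
    obtain ⟨x, y, hgxy, hxy⟩ := hinj
    set β := g x with hβ
    have hxβ : 0 < p x β := hg x
    have hyβ : 0 < p y β := by rw [hgxy]; exact hg y
    -- x is not a mixer (else bb_excl for x would kill p y β)
    have hxpure : p x β = 1 := by
      by_contra hc
      have hlt : p x β < 1 := lt_of_le_of_ne (bb_le_one hs x β) hc
      have : ∃ β2, β2 ≠ β ∧ 0 < p x β2 := by
        by_contra h2'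
        push_neg at h2'
        have : ∑ γ2, p x γ2 = p x β := by
          rw [Finset.sum_eq_single β]
          · intro b _ hb
            exact le_antisymm (h2' b hb) ((hs x).1 b)
          · intro h; exact absurd (Finset.mem_univ β) h
        rw [(hs x).2] at this; linarith
      obtain ⟨β2, hβ2ne, hβ2pos⟩ := this
      have := bb_excl hp (Ne.symm hβ2ne) hxβ hβ2pos y hxy.symm β hxβ
      linarith
    have hxi : x ≠ i := by
      rintro rfl
      have := bb_pair hs x (hgg : γ ≠ γ')
      -- x = i mixes so p x β < 1 for all β in support? derive contradiction:
      -- p i γ, p i γ' > 0, p x β = 1; β ≠ γ or β ≠ γ'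
      by_cases hb : β = γ
      · have := bb_pair hs x (show β ≠ γ' by rw [hb]; exact hgg)
        linarith
      · have := bb_pair hs x (show β ≠ γ from hb)
        linarith
    -- Nash for x: cost at β ≤ cost at γ
    have hN := hp.1.2 x β γ hxβ
    simp only [bbCost] at hN
    -- load on β from others ≥ 1 (player y)
    have hymem : y ∈ Finset.univ.erase x := Finset.mem_erase.2 ⟨hxy.symm, Finset.mem_univ y⟩
    have hyβ1 : p y β = 1 := by
      -- y is also pure on β by the same argument, or: if y mixes, bb_excl kills p x β
      by_contra hc
      have hlt : p y β < 1 := lt_of_le_of_ne (bb_le_one hs y β) hc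
      have : ∃ β2, β2 ≠ β ∧ 0 < p y β2 := by
        by_contra h2'
        push_neg at h2'
        have : ∑ γ2, p y γ2 = p y β := by
          rw [Finset.sum_eq_single β]
          · intro b _ hb
            exact le_antisymm (h2' b hb) ((hs y).1 b)
          · intro h; exact absurd (Finset.mem_univ β) h
        rw [(hs y).2] at this; linarith
      obtain ⟨β2, hβ2ne, hβ2pos⟩ := this
      have := bb_excl hp (Ne.symm hβ2ne) hyβ hβ2pos x hxy β hyβ
      linarith
    have hload_β : (1:ℝ) ≤ ∑ k ∈ Finset.univ.erase x, p k β := by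
      have h' : p y β ≤ ∑ k ∈ Finset.univ.erase x, p k β :=
        Finset.single_le_sum (f := fun k => p k β) (fun z _ => (hs z).1 β) hymem
      linarith [hyβ1]
    -- load on γ from others (w.r.t. x) is exactly p i γ < 1
    have hload_γ : ∑ k ∈ Finset.univ.erase x, p k γ = p i γ := by
      rw [Finset.sum_eq_single i]
      · intro b hb hbi
        exact bb_excl hp hgg h1 h2 b hbi γ h1
      · intro h
        exact absurd (Finset.mem_erase.2 ⟨Ne.symm hxi, Finset.mem_univ i⟩) h
    have hγlt : p i γ < 1 := by
      have := bb_pair hs i hgg; linarith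
    rw [hload_γ] at hN
    linarith

end aux

/-- **Every weakly stable Nash equilibrium of the `n`-balls-`n`-bins game is pure**:
each ball puts probability one on a single bin, and the assignment of balls to
bins is a bijection (each bin receives exactly one ball). -/
theorem ballsBins_weaklyStable_pure {n : ℕ} (p : Fin n → Fin n → ℝ)
    (hp : bbWeaklyStable p) :
    ∃ σ : Equiv.Perm (Fin n), ∀ i γ, p i γ = if γ = σ i then 1 else 0 := by
  have hs : bbSimplex p := hp.1.1
  -- every player is pure
  have hpure : ∀ i, ∃ β, p i β = 1 := by
    intro i
    obtain ⟨β, hβ⟩ := bb_exists_pos hs i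
    refine ⟨β, ?_⟩
    by_contra hc
    have hlt : p i β < 1 := lt_of_le_of_ne (bb_le_one hs i β) hc
    have : ∃ β2, β2 ≠ β ∧ 0 < p i β2 := by
      by_contra h2'
      push_neg at h2'
      have : ∑ γ2, p i γ2 = p i β := by
        rw [Finset.sum_eq_single β]
        · intro b _ hb
          exact le_antisymm (h2' b hb) ((hs i).1 b)
        · intro h; exact absurd (Finset.mem_univ β) h
      rw [(hs i).2] at this; linarith
    obtain ⟨β2, hβ2ne, hβ2pos⟩ := this
    exact bb_no_mixer hp (Ne.symm hβ2ne) hβ hβ2pos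
  choose f hf using hpure
  have hzero : ∀ i γ, γ ≠ f i → p i γ = 0 := by
    intro i γ hγ
    have := bb_pair hs i hγ
    have h0 := (hs i).1 γ
    linarith [hf i]
  -- f is injective
  have hinj : Function.Injective f := by
    intro x y hxy
    by_contra hne
    have hnsurj : ∃ β, ∀ k, f k ≠ β := by
      by_contra hno
      push_neg at hno
      exact hne ((Finite.injective_iff_surjective.2 (fun β => hno β)) hxy)
    obtain ⟨β, hβ⟩ := hnsurj
    -- Nash for x at f x vs β
    have hxpos : 0 < p x (f x) := by rw [hf x]; norm_num
    have hN := hp.1.2 x (f x) β hxpos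
    simp only [bbCost] at hN
    have hymem : y ∈ Finset.univ.erase x := Finset.mem_erase.2 ⟨fun h => hne h.symm, Finset.mem_univ y⟩
    have hload1 : (1:ℝ) ≤ ∑ k ∈ Finset.univ.erase x, p k (f x) := by
      have h1 : p y (f x) ≤ ∑ k ∈ Finset.univ.erase x, p k (f x) :=
        Finset.single_le_sum (f := fun k => p k (f x)) (fun z _ => (hs z).1 (f x)) hymem
      have h2 : p y (f x) = 1 := by rw [hxy]; exact hf y
      linarith
    have hload0 : ∑ k ∈ Finset.univ.erase x, p k β = 0 := by
      apply Finset.sum_eq_zero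
      intro k _
      exact hzero k β (Ne.symm (hβ k))
    rw [hload0] at hN
    linarith
  refine ⟨Equiv.ofBijective f ((Finite.injective_iff_bijective).1 hinj), ?_⟩
  intro i γ
  simp only [Equiv.ofBijective_apply]
  by_cases h : γ = f i
  · rw [if_pos h, h, hf i]
  · rw [if_neg h]; exact hzero i γ h
end

section
/- For every n ≥ 4, the set of (mixed) Nash equilibria of the n-balls-n-bins game is uncountable. -/
open Finset

noncomputable def prof (n : ℕ) (x : ℝ) (i γ : Fin n) : ℝ :=
  if i.val = 0 then (if γ.val = 0 then x else if γ.val = 1 then 1 - x else 0)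
  else if i.val = 1 then (if γ.val = 0 then 1/2 else if γ.val = 2 then 1/2 else 0)
  else if i.val = 2 then (if γ.val = 1 then 1/2 else if γ.val = 3 then 1/2 else 0)
  else if i.val = 3 then (if γ.val = 2 then x else if γ.val = 3 then 1 - x else 0)
  else if γ.val = i.val then 1 else 0

noncomputable def Lf (x : ℝ) (k : ℕ) : ℝ :=
  if k = 0 then x + 1/2 else if k = 1 then (1-x) + 1/2
  else if k = 2 then 1/2 + x else if k = 3 then 1/2 + (1-x) else 1

lemma sum_ite_val {n : ℕ} (k : ℕ) (hk : k < n) (c : ℝ) :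
    ∑ j : Fin n, (if j.val = k then c else 0) = c := by
  rw [Finset.sum_eq_single (⟨k, hk⟩ : Fin n)]
  · rw [if_pos rfl]
  · intro b _ hb
    simp only [ne_eq, Fin.ext_iff] at hb
    rw [if_neg hb]
  · intro h
    exact absurd (Finset.mem_univ _) h

lemma colsum (n : ℕ) (hn : 4 ≤ n) (x : ℝ) (γ : Fin n) :
    ∑ j, prof n x j γ = Lf x γ.val := by
  have h : ∀ j : Fin n, prof n x j γ =
      (if j.val = 0 then (if γ.val = 0 then x else if γ.val = 1 then 1 - x else 0) else 0)
      + (if j.val = 1 then (if γ.val = 0 then 1/2 else if γ.val = 2 then 1/2 else 0) else 0)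
      + (if j.val = 2 then (if γ.val = 1 then 1/2 else if γ.val = 3 then 1/2 else 0) else 0)
      + (if j.val = 3 then (if γ.val = 2 then x else if γ.val = 3 then 1 - x else 0) else 0)
      + (if j.val = γ.val ∧ 4 ≤ γ.val then 1 else 0) := by
    intro j
    unfold prof
    rcases (by omega : j.val = 0 ∨ j.val = 1 ∨ j.val = 2 ∨ j.val = 3 ∨ 4 ≤ j.val) with
      h | h | h | h | h
    · simp only [h]
      norm_num
      omega
    · simp only [h]
      norm_num
      omega
    · simp only [h]
      norm_num
      omega
    · simp only [h]
      norm_num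
      omega
    · have h0 : ¬ j.val = 0 := by omega
      have h1 : ¬ j.val = 1 := by omega
      have h2 : ¬ j.val = 2 := by omega
      have h3 : ¬ j.val = 3 := by omega
      simp only [h0, h1, h2, h3, if_false, zero_add]
      split_ifs <;> first | (exfalso; omega) | rfl
  rw [Finset.sum_congr rfl (fun j _ => h j)]
  simp only [Finset.sum_add_distrib]
  rw [sum_ite_val 0 (by omega), sum_ite_val 1 (by omega), sum_ite_val 2 (by omega),
      sum_ite_val 3 (by omega)]
  have htail : ∑ j : Fin n, (if j.val = γ.val ∧ 4 ≤ γ.val then (1:ℝ) else 0) =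
      if 4 ≤ γ.val then 1 else 0 := by
    by_cases hγ : 4 ≤ γ.val
    · rw [if_pos hγ]
      have h2 : ∀ j : Fin n, (if j.val = γ.val ∧ 4 ≤ γ.val then (1:ℝ) else 0) =
          if j.val = γ.val then 1 else 0 := fun j => by simp [hγ]
      rw [Finset.sum_congr rfl (fun j _ => h2 j)]
      exact sum_ite_val γ.val γ.isLt 1
    · simp [hγ]
  rw [htail]
  unfold Lf
  split_ifs <;> first | (exfalso; omega) | ring

lemma rowsum (n : ℕ) (hn : 4 ≤ n) (x : ℝ) (i : Fin n) : ∑ γ, prof n x i γ = 1 := by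
  rcases (by omega : i.val = 0 ∨ i.val = 1 ∨ i.val = 2 ∨ i.val = 3 ∨ 4 ≤ i.val) with
    h | h | h | h | h
  · have e : ∀ γ : Fin n, prof n x i γ =
        (if γ.val = 0 then x else 0) + (if γ.val = 1 then 1 - x else 0) := by
      intro γ; unfold prof; split_ifs <;> first | (exfalso; omega) | ring
    rw [Finset.sum_congr rfl fun γ _ => e γ, Finset.sum_add_distrib,
      sum_ite_val 0 (by omega), sum_ite_val 1 (by omega)]; ring
  · have e : ∀ γ : Fin n, prof n x i γ =
        (if γ.val = 0 then 1/2 else 0) + (if γ.val = 2 then 1/2 else 0) := by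
      intro γ; unfold prof; split_ifs <;> first | (exfalso; omega) | ring
    rw [Finset.sum_congr rfl fun γ _ => e γ, Finset.sum_add_distrib,
      sum_ite_val 0 (by omega), sum_ite_val 2 (by omega)]; ring
  · have e : ∀ γ : Fin n, prof n x i γ =
        (if γ.val = 1 then 1/2 else 0) + (if γ.val = 3 then 1/2 else 0) := by
      intro γ; unfold prof; split_ifs <;> first | (exfalso; omega) | ring
    rw [Finset.sum_congr rfl fun γ _ => e γ, Finset.sum_add_distrib,
      sum_ite_val 1 (by omega), sum_ite_val 3 (by omega)]; ring
  · have e : ∀ γ : Fin n, prof n x i γ =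
        (if γ.val = 2 then x else 0) + (if γ.val = 3 then 1 - x else 0) := by
      intro γ; unfold prof; split_ifs <;> first | (exfalso; omega) | ring
    rw [Finset.sum_congr rfl fun γ _ => e γ, Finset.sum_add_distrib,
      sum_ite_val 2 (by omega), sum_ite_val 3 (by omega)]; ring
  · have e : ∀ γ : Fin n, prof n x i γ = (if γ.val = i.val then 1 else 0) := by
      intro γ; unfold prof; split_ifs <;> first | (exfalso; omega) | ring
    rw [Finset.sum_congr rfl fun γ _ => e γ, sum_ite_val i.val i.isLt]

lemma prof_nonneg (n : ℕ) (x : ℝ) (hx1 : 1/4 ≤ x) (hx2 : x ≤ 3/4) (i γ : Fin n) :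
    0 ≤ prof n x i γ := by
  unfold prof; split_ifs <;> norm_num <;> linarith

lemma cost_eq (n : ℕ) (hn : 4 ≤ n) (x : ℝ) (i γ : Fin n) :
    bbCost n (prof n x) i γ = 1 + Lf x γ.val - prof n x i γ := by
  unfold bbCost
  rw [Finset.sum_erase_eq_sub (Finset.mem_univ i), colsum n hn]
  ring

set_option maxHeartbeats 2000000 in
lemma prof_nash (n : ℕ) (hn : 4 ≤ n) (x : ℝ) (hx1 : 1/4 ≤ x) (hx2 : x ≤ 3/4) :
    bbNash (prof n x) := by
  refine ⟨fun i => ⟨fun γ => prof_nonneg n x hx1 hx2 i γ, rowsum n hn x i⟩, ?_⟩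
  intro i γ γ' h
  rw [cost_eq n hn, cost_eq n hn]
  have key : Lf x γ.val - prof n x i γ ≤ Lf x γ'.val - prof n x i γ' := by
    unfold prof at h
    unfold prof Lf
    split_ifs at h ⊢ <;> first | (exfalso; omega) | linarith
  linarith

/-- **For `n ≥ 4`, the set of mixed Nash equilibria of the `n`-balls-`n`-bins
game is uncountable.** -/
theorem ballsBins_uncountably_many_Nash (n : ℕ) (hn : 4 ≤ n) :
    ¬ (Set.Countable {p : Fin n → Fin n → ℝ | bbNash p}) := by
  intro hc
  have hinj : Function.Injective (prof n) := by
    intro a b hab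
    have h0 : (0 : ℕ) < n := by omega
    have := congrFun (congrFun hab ⟨0, h0⟩) ⟨0, h0⟩
    simpa [prof] using this
  have hsub : Set.Icc (1/4 : ℝ) (3/4) ⊆ (prof n) ⁻¹' {p | bbNash p} := by
    intro x hx
    exact prof_nash n hn x hx.1 hx.2
  have hcc : (Set.Icc (1/4 : ℝ) (3/4)).Countable :=
    Set.Countable.mono hsub (hc.preimage hinj)
  have := hcc.measure_zero MeasureTheory.volume
  rw [Real.volume_Icc] at this
  norm_num [ENNReal.ofReal_eq_zero] at this
end

section
/- Consider the star-graph replicator system dp_i/dt = p_i(1 − p_i)((w+1)z − w) for i = 1,…,n and dz/dt = z(1 − z)((w+1)·Σ_{i=1}^n p_i − n·w), with all coordinates in (0,1). Then for all leaves i, j, the quantity [ln p_i(t) − ln(1 − p_i(t))] − [ln p_j(t) − ln(1 − p_j(t))] is constant along every solution (independent of t). -/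
open Set

/-! The log-odds map `p ↦ log p - log (1 - p)` has derivative `1 / (p (1 - p))`, which cancels
the replicator factor `p_i (1 - p_i)`. So along a solution the log-odds of every leaf has
derivative `(w + 1) z - w`, the same for all leaves, and the difference of the log-odds of two
leaves has derivative zero. -/

theorem HasDerivAt.log_sub_log_one_sub {f : ℝ → ℝ} {f' x : ℝ} (hf : HasDerivAt f f' x)
    (h₀ : f x ≠ 0) (h₁ : 1 - f x ≠ 0) :
    HasDerivAt (fun y => Real.log (f y) - Real.log (1 - f y)) (f' / (f x * (1 - f x))) x := by
  refine ((hf.log h₀).fun_sub ((hf.const_sub 1).log h₁)).congr_deriv ?_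
  field_simp
  ring

theorem HasDerivAt.log_sub_log_one_sub_of_replicator {f g : ℝ → ℝ} {x : ℝ}
    (hf : HasDerivAt f (f x * (1 - f x) * g x) x) (hx : f x ∈ Ioo (0 : ℝ) 1) :
    HasDerivAt (fun y => Real.log (f y) - Real.log (1 - f y)) (g x) x := by
  have h₀ : f x ≠ 0 := hx.1.ne'
  have h₁ : 1 - f x ≠ 0 := (sub_pos.2 hx.2).ne'
  refine (hf.log_sub_log_one_sub h₀ h₁).congr_deriv ?_
  field_simp

theorem sub_eq_sub_of_hasDerivAt_eq {f g f' : ℝ → ℝ} (hf : ∀ x, HasDerivAt f (f' x) x)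
    (hg : ∀ x, HasDerivAt g (f' x) x) (a b : ℝ) : f a - g a = f b - g b := by
  have hfg : ∀ x, HasDerivAt (fun y => f y - g y) 0 x := fun x => by
    simpa only [sub_self] using (hf x).fun_sub (hg x)
  exact is_const_of_deriv_eq_zero (fun x => (hfg x).differentiableAt) (fun x => (hfg x).deriv) a b

theorem star_replicator_invariant_general (n : ℕ) (w : ℝ)
    (p : ℝ → Fin n → ℝ) (z : ℝ → ℝ)
    (hmem : ∀ t : ℝ, (∀ i, p t i ∈ Ioo (0:ℝ) 1) ∧ z t ∈ Ioo (0:ℝ) 1)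
    (hp : ∀ (t : ℝ) (i : Fin n),
      HasDerivAt (fun τ => p τ i) (p t i * (1 - p t i) * ((w + 1) * z t - w)) t) :
    ∀ (i j : Fin n) (t₁ t₂ : ℝ),
      (Real.log (p t₁ i) - Real.log (1 - p t₁ i))
        - (Real.log (p t₁ j) - Real.log (1 - p t₁ j)) =
      (Real.log (p t₂ i) - Real.log (1 - p t₂ i))
        - (Real.log (p t₂ j) - Real.log (1 - p t₂ j)) := by
  intro i j t₁ t₂
  have hlogOdds : ∀ k t, HasDerivAt (fun τ => Real.log (p τ k) - Real.log (1 - p τ k))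
      ((w + 1) * z t - w) t := fun k t =>
    HasDerivAt.log_sub_log_one_sub_of_replicator (g := fun τ => (w + 1) * z τ - w)
      (hp t k) ((hmem t).1 k)
  exact sub_eq_sub_of_hasDerivAt_eq (hlogOdds i) (hlogOdds j) t₁ t₂

/-- **Invariants of the star-graph replicator system.**
For the replicator dynamics on the star network of coordination games `G(w)`,
`dp_i/dt = p_i(1-p_i)((w+1)z - w)` for the leaves `i = 1,…,n` and
`dz/dt = z(1-z)((w+1)Σ_i p_i - n·w)` for the center, with all coordinates in
`(0,1)`, the quantity `[ln p_i - ln(1-p_i)] - [ln p_j - ln(1-p_j)]` is constant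
along every solution, for all leaves `i, j`. -/
theorem star_replicator_invariant (n : ℕ) (w : ℝ) (hw : 1 ≤ w)
    (p : ℝ → Fin n → ℝ) (z : ℝ → ℝ)
    (hmem : ∀ t : ℝ, (∀ i, p t i ∈ Ioo (0:ℝ) 1) ∧ z t ∈ Ioo (0:ℝ) 1)
    (hp : ∀ (t : ℝ) (i : Fin n),
      HasDerivAt (fun τ => p τ i) (p t i * (1 - p t i) * ((w + 1) * z t - w)) t)
    (hz : ∀ t : ℝ,
      HasDerivAt z (z t * (1 - z t) * ((w + 1) * (∑ i, p t i) - n * w)) t) :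
    ∀ (i j : Fin n) (t₁ t₂ : ℝ),
      (Real.log (p t₁ i) - Real.log (1 - p t₁ i))
        - (Real.log (p t₁ j) - Real.log (1 - p t₁ j)) =
      (Real.log (p t₂ i) - Real.log (1 - p t₂ i))
        - (Real.log (p t₂ j) - Real.log (1 - p t₂ j)) :=
  star_replicator_invariant_general n w p z hmem hp
end
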